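/- arXiv:2211.11368 — 11 statements merged into one kernel-verified Lean document; each statement's English description precedes it below -/
import Mathlib

section
/- Assume additionally that ℙ(Z·G ≠ 0) > 0. Then φ is differentiable on (τ, ∞) with φ′(λ) = −𝔼[(Z·G/(λ−Z))²] < 0 for every λ > τ; in particular, φ is strictly decreasing on (τ, ∞). -/
open MeasureTheory ProbabilityTheory Real Set Filter

/-- Under the mixed-GLM spectral setup, the function
`φ(λ) = λ·𝔼[Z G² / (λ − Z)]` is differentiable on `(τ, ∞)` with
`φ′(λ) = −𝔼[(Z G/(λ−Z))²] < 0`, hence strictly decreasing there. -/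
theorem phi_strictAnti
    {Ω : Type*} [MeasureSpace Ω] [IsProbabilityMeasure (ℙ : Measure Ω)]
    (G Z : Ω → ℝ) (hGmeas : Measurable G) (hZmeas : Measurable Z)
    (hG : Measure.map G ℙ = gaussianReal 0 1)
    (hZbdd : ∃ C : ℝ, ∀ᵐ ω ∂ℙ, |Z ω| ≤ C)
    (τ : ℝ) (hτ : τ = essSup Z ℙ) (hτpos : 0 < τ)
    (hZ0 : ℙ {ω | Z ω = 0} < 1)
    (hZG : 0 < ℙ {ω | Z ω * G ω ≠ 0})
    (φ : ℝ → ℝ)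
    (hφ : ∀ lam : ℝ, φ lam = lam * ∫ ω, Z ω * (G ω) ^ 2 / (lam - Z ω) ∂ℙ) :
    (∀ lam ∈ Set.Ioi τ,
        HasDerivAt φ (-(∫ ω, (Z ω * G ω / (lam - Z ω)) ^ 2 ∂ℙ)) lam ∧
        -(∫ ω, (Z ω * G ω / (lam - Z ω)) ^ 2 ∂ℙ) < 0) ∧
    StrictAntiOn φ (Set.Ioi τ) := by
  obtain ⟨C, hC⟩ := hZbdd
  have hC0 : 0 ≤ C := by
    by_contra h
    push_neg at h
    obtain ⟨ω, hω⟩ := hC.exists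
    exact absurd (le_trans (abs_nonneg _) hω) (not_le.2 h)
  -- Z ≤ τ a.e.
  have hZle : ∀ᵐ ω ∂(ℙ : Measure Ω), Z ω ≤ τ := by
    rw [hτ]
    exact ae_le_essSup ⟨C, eventually_map.2 (hC.mono fun ω h => (abs_le.1 h).2)⟩
  -- integrability of G ^ 2
  have hG2 : Integrable (fun ω => G ω ^ 2) ℙ := by
    have h2 : Integrable (fun x : ℝ => x ^ 2 * rexp (-(1/2) * x ^ 2)) volume := by
      have := integrable_rpow_mul_exp_neg_mul_sq (b := 1/2) (by norm_num)
        (s := 2) (by norm_num)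
      simpa [Real.rpow_two] using this
    have h1 : Integrable (fun x : ℝ => x ^ 2) (gaussianReal 0 1) := by
      rw [gaussianReal_of_var_ne_zero 0 one_ne_zero,
        integrable_withDensity_iff (measurable_gaussianPDF 0 1)
          (ae_of_all _ fun x => ENNReal.ofReal_lt_top)]
      have heq : (fun x : ℝ => x ^ 2 * (gaussianPDF 0 1 x).toReal)
          = fun x : ℝ => (√(2*π))⁻¹ * (x ^ 2 * rexp (-(1/2) * x ^ 2)) := by
        funext x
        rw [gaussianPDF, ENNReal.toReal_ofReal (gaussianPDFReal_nonneg _ _ _),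
          gaussianPDFReal]
        have harg : -(x - 0)^2/(2*((1:NNReal):ℝ)) = -(1/2) * x ^ 2 := by
          push_cast; ring
        rw [harg]
        push_cast
        ring
      rw [heq]
      exact h2.const_mul _
    have h1' : Integrable (fun x : ℝ => x ^ 2) (Measure.map G ℙ) := hG ▸ h1
    exact (integrable_map_measure
      ((measurable_id.pow_const 2).aestronglyMeasurable) hGmeas.aemeasurable).1 h1'
  -- φ as a parametric integral
  set F : ℝ → Ω → ℝ := fun x ω => x * (Z ω * G ω ^ 2 / (x - Z ω)) with hF
  set F' : ℝ → Ω → ℝ := fun x ω => -((Z ω * G ω / (x - Z ω)) ^ 2) with hF'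
  have hφeq : φ = fun x => ∫ ω, F x ω ∂ℙ := by
    funext x
    rw [hφ x, ← integral_const_mul]
  have hFmeas : ∀ x : ℝ, AEStronglyMeasurable (F x) ℙ := fun x =>
    (((hZmeas.mul (hGmeas.pow_const 2)).div
      (measurable_const.sub hZmeas)).const_mul x).aestronglyMeasurable
  have hF'meas : ∀ x : ℝ, AEStronglyMeasurable (F' x) ℙ := fun x =>
    ((((hZmeas.mul hGmeas).div (measurable_const.sub hZmeas)).pow_const 2).neg).aestronglyMeasurable
  have main : ∀ lam ∈ Set.Ioi τ,
      HasDerivAt φ (-(∫ ω, (Z ω * G ω / (lam - Z ω)) ^ 2 ∂ℙ)) lam ∧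
      -(∫ ω, (Z ω * G ω / (lam - Z ω)) ^ 2 ∂ℙ) < 0 := by
    intro lam hlam
    rw [Set.mem_Ioi] at hlam
    obtain ⟨δ, hδdef⟩ : ∃ δ : ℝ, δ = (lam - τ)/2 := ⟨_, rfl⟩
    have hδ : 0 < δ := by
      have h4 : δ = (lam - τ)/2 := hδdef
      linarith
    -- integrability of F lam
    have hFint : Integrable (F lam) ℙ := by
      apply Integrable.mono' (hG2.const_mul (|lam| * C / δ)) (hFmeas lam)
      filter_upwards [hZle, hC] with ω h1 h2
      have hpos : 0 < lam - Z ω := by linarith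
      have hge : δ ≤ lam - Z ω := by
        have h4 : δ = (lam - τ)/2 := hδdef
        linarith
      have hnum : |Z ω| * G ω ^ 2 ≤ C * G ω ^ 2 :=
        mul_le_mul_of_nonneg_right h2 (sq_nonneg _)
      have hdiv : |Z ω| * G ω ^ 2 / (lam - Z ω) ≤ C * G ω ^ 2 / δ :=
        div_le_div₀ (by positivity) hnum hδ hge
      have : ‖F lam ω‖ = |lam| * (|Z ω| * G ω ^ 2 / (lam - Z ω)) := by
        simp only [hF, Real.norm_eq_abs, abs_mul, abs_div, abs_of_pos hpos,
          sq_abs, abs_mul]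
        rw [abs_of_nonneg (sq_nonneg (G ω))]
      rw [this]
      calc |lam| * (|Z ω| * G ω ^ 2 / (lam - Z ω)) ≤ |lam| * (C * G ω ^ 2 / δ) :=
            mul_le_mul_of_nonneg_left hdiv (abs_nonneg _)
        _ = |lam| * C / δ * G ω ^ 2 := by ring
    -- dominated differentiation
    have key := hasDerivAt_integral_of_dominated_loc_of_deriv_le (F := F) (F' := F')
      (x₀ := lam) (bound := fun ω => C^2 * G ω ^ 2 / δ^2) (Metric.ball_mem_nhds lam hδ)
      (Eventually.of_forall hFmeas) hFint (hF'meas lam) ?_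
      ((hG2.const_mul (C^2)).div_const (δ^2)) ?_
    · obtain ⟨hF'int, hderiv⟩ := key
      have hIeq : (∫ ω, F' lam ω ∂ℙ) = -(∫ ω, (Z ω * G ω / (lam - Z ω)) ^ 2 ∂ℙ) := by
        simp only [hF']
        rw [integral_neg]
      have hint2 : Integrable (fun ω => (Z ω * G ω / (lam - Z ω)) ^ 2) ℙ := by
        have h := hF'int.neg
        have he : (fun ω => (Z ω * G ω / (lam - Z ω)) ^ 2)
            = fun ω => -(F' lam ω) := by
          funext ω
          simp [hF']
        rw [he]
        exact h
      constructor
      · rw [hφeq, ← hIeq]; exact hderiv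
      · have hpos : 0 < ∫ ω, (Z ω * G ω / (lam - Z ω)) ^ 2 ∂ℙ := by
          rw [integral_pos_iff_support_of_nonneg_ae
            (Eventually.of_forall fun ω => sq_nonneg _) hint2]
          refine lt_of_lt_of_le hZG (measure_mono_ae ?_)
          filter_upwards [hZle] with ω h1 hω
          have hpos : 0 < lam - Z ω := by linarith
          have : Z ω * G ω / (lam - Z ω) ≠ 0 := div_ne_zero hω (ne_of_gt hpos)
          exact pow_ne_zero 2 this
        linarith
    · -- bound on F'
      filter_upwards [hZle, hC] with ω h1 h2 x hx
      rw [Metric.mem_ball, Real.dist_eq] at hx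
      have hge : δ ≤ x - Z ω := by
        have h3 := (abs_lt.1 hx).1
        have h4 : δ = (lam - τ)/2 := hδdef
        linarith
      have hpos : 0 < x - Z ω := lt_of_lt_of_le hδ hge
      have hn : ‖F' x ω‖ = (Z ω * G ω)^2 / (x - Z ω)^2 := by
        rw [show F' x ω = -((Z ω * G ω / (x - Z ω)) ^ 2) from rfl, norm_neg,
          Real.norm_eq_abs, abs_of_nonneg (sq_nonneg _), div_pow]
      rw [hn]
      have hnum : (Z ω * G ω)^2 ≤ C^2 * G ω ^ 2 := by
        rw [mul_pow]
        apply mul_le_mul_of_nonneg_right _ (sq_nonneg _)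
        calc Z ω ^ 2 = |Z ω| ^ 2 := (sq_abs _).symm
          _ ≤ C ^ 2 := by
              apply pow_le_pow_left₀ (abs_nonneg _) h2
      have hden : δ^2 ≤ (x - Z ω)^2 := by
        apply pow_le_pow_left₀ hδ.le hge
      exact div_le_div₀ (by positivity) hnum (by positivity) hden
    · -- pointwise derivative
      filter_upwards [hZle] with ω h1 x hx
      rw [Metric.mem_ball, Real.dist_eq] at hx
      have hge : δ ≤ x - Z ω := by
        have h3 := (abs_lt.1 hx).1
        have h4 : δ = (lam - τ)/2 := hδdef
        linarith
      have hne : x - Z ω ≠ 0 := ne_of_gt (lt_of_lt_of_le hδ hge)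
      have hd1 : HasDerivAt (fun y : ℝ => y * (Z ω * G ω ^ 2)) (Z ω * G ω ^ 2) x := by
        simpa using (hasDerivAt_id x).mul_const (Z ω * G ω ^ 2)
      have hd2 : HasDerivAt (fun y : ℝ => y - Z ω) 1 x := (hasDerivAt_id x).sub_const _
      have hd3 : HasDerivAt (fun y : ℝ => y * (Z ω * G ω ^ 2) / (y - Z ω)) _ x := hd1.div hd2 hne
      have heq : (fun y : ℝ => y * (Z ω * G ω ^ 2) / (y - Z ω))
          = fun y : ℝ => y * (Z ω * G ω ^ 2 / (y - Z ω)) := by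
        funext y
        rw [mul_div_assoc]
      rw [heq] at hd3
      have hval : (Z ω * G ω ^ 2 * (x - Z ω) - x * (Z ω * G ω ^ 2) * 1) / (x - Z ω) ^ 2
          = F' x ω := by
        rw [show F' x ω = -((Z ω * G ω / (x - Z ω)) ^ 2) from rfl]
        field_simp
        ring
      rw [hval] at hd3
      exact hd3
  refine ⟨main, strictAntiOn_of_deriv_neg (convex_Ioi τ)
    (fun x hx => ((main x hx).1).continuousAt.continuousWithinAt) (fun x hx => ?_)⟩
  rw [interior_Ioi] at hx
  rw [((main x hx).1).deriv]
  exact (main x hx).2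
end

section
/- Let Δ > 0 and suppose λ̄ ∈ (τ, ∞) satisfies 𝔼[(Z/(λ̄−Z))²] = 1/Δ. Then λ̄ is the unique global minimizer of ψ(·; Δ) on (τ, ∞): ψ(·; Δ) is strictly decreasing on (τ, λ̄] and strictly increasing on [λ̄, ∞), so that ψ(λ; Δ) > ψ(λ̄; Δ) for every λ ∈ (τ, ∞) with λ ≠ λ̄. -/
open MeasureTheory ProbabilityTheory Real Set Filter

section Aux

variable {Ω : Type*} [MeasureSpace Ω] [IsProbabilityMeasure (ℙ : Measure Ω)]

/-- Integrability of a measurable a.e.-bounded function on a probability space. -/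
lemma my_integrable_bdd {f : Ω → ℝ} (hf : Measurable f) {K : ℝ}
    (hK : ∀ᵐ ω ∂ℙ, |f ω| ≤ K) : Integrable f ℙ :=
  (integrable_const K).mono' hf.aestronglyMeasurable
    (by simpa [Real.norm_eq_abs] using hK)

variable {Z : Ω → ℝ} (hZmeas : Measurable Z) {C τ : ℝ}
  (hC : ∀ᵐ ω ∂ℙ, |Z ω| ≤ C) (hτ : ∀ᵐ ω ∂ℙ, Z ω ≤ τ)

include hZmeas hC hτ in
lemma my_int_I {a b : ℝ} (ha : τ < a) (hb : τ < b) :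
    Integrable (fun ω => Z ω ^ 2 / ((a - Z ω) * (b - Z ω))) ℙ := by
  apply my_integrable_bdd (by fun_prop) (K := C ^ 2 / ((a - τ) * (b - τ)))
  filter_upwards [hC, hτ] with ω h1 h2
  have hda : 0 < a - Z ω := by linarith
  have hdb : 0 < b - Z ω := by linarith
  rw [abs_div, abs_of_nonneg (by positivity : (0:ℝ) ≤ Z ω ^ 2),
    abs_of_nonneg (by positivity : (0:ℝ) ≤ (a - Z ω) * (b - Z ω))]
  apply div_le_div₀ (by positivity)
  · exact sq_le_sq' (neg_le_of_abs_le h1) (le_of_abs_le h1)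
  · nlinarith
  · nlinarith

include hZmeas hC hτ in
lemma my_int_J {a : ℝ} (ha : τ < a) :
    Integrable (fun ω => Z ω / (a - Z ω)) ℙ := by
  apply my_integrable_bdd (by fun_prop) (K := C / (a - τ))
  filter_upwards [hC, hτ] with ω h1 h2
  have hda : 0 < a - Z ω := by linarith
  rw [abs_div, abs_of_nonneg hda.le]
  exact div_le_div₀ (le_trans (abs_nonneg _) h1) h1 (by linarith) (by linarith)

include hZmeas hC hτ in
/-- Difference formula for ψ. -/
lemma my_psi_diff (ψ : ℝ → ℝ → ℝ)
    (hψ : ∀ (lam Δ : ℝ), ψ lam Δ = lam * (1 / Δ + ∫ ω, Z ω / (lam - Z ω) ∂ℙ))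
    (Δ : ℝ) {l₁ l₂ : ℝ} (h1 : τ < l₁) (h2 : τ < l₂) :
    ψ l₂ Δ - ψ l₁ Δ
      = (l₂ - l₁) * (1 / Δ - ∫ ω, Z ω ^ 2 / ((l₁ - Z ω) * (l₂ - Z ω)) ∂ℙ) := by
  have hJ1 := my_int_J hZmeas hC hτ h1
  have hJ2 := my_int_J hZmeas hC hτ h2
  have key : l₂ * ∫ ω, Z ω / (l₂ - Z ω) ∂ℙ - l₁ * ∫ ω, Z ω / (l₁ - Z ω) ∂ℙ
      = -(l₂ - l₁) * ∫ ω, Z ω ^ 2 / ((l₁ - Z ω) * (l₂ - Z ω)) ∂ℙ := by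
    rw [← integral_const_mul l₂, ← integral_const_mul l₁, ← integral_const_mul (-(l₂ - l₁)),
      ← integral_sub (hJ2.const_mul l₂) (hJ1.const_mul l₁)]
    apply integral_congr_ae
    filter_upwards [hτ] with ω hω
    have hd1 : l₁ - Z ω ≠ 0 := by intro h; linarith
    have hd2 : l₂ - Z ω ≠ 0 := by intro h; linarith
    field_simp
    ring
  rw [hψ, hψ]
  linear_combination key

include hZmeas hC hτ in
/-- Strict monotone comparison of the integrals `I`. -/
lemma my_I_strict (hZne : 0 < ℙ {ω | Z ω ≠ 0})
    {a₁ a₂ b₁ b₂ : ℝ} (ha₁ : τ < a₁) (ha₂ : τ < a₂)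
    (hab₁ : a₁ ≤ b₁) (hab₂ : a₂ ≤ b₂) (hstrict : a₁ < b₁ ∨ a₂ < b₂) :
    ∫ ω, Z ω ^ 2 / ((b₁ - Z ω) * (b₂ - Z ω)) ∂ℙ
      < ∫ ω, Z ω ^ 2 / ((a₁ - Z ω) * (a₂ - Z ω)) ∂ℙ := by
  have hIa := my_int_I hZmeas hC hτ ha₁ ha₂
  have hIb := my_int_I hZmeas hC hτ (lt_of_lt_of_le ha₁ hab₁) (lt_of_lt_of_le ha₂ hab₂)
  set g : Ω → ℝ := fun ω =>
    Z ω ^ 2 / ((a₁ - Z ω) * (a₂ - Z ω)) - Z ω ^ 2 / ((b₁ - Z ω) * (b₂ - Z ω)) with hg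
  have hkey : ∀ᵐ ω ∂ℙ, 0 ≤ g ω ∧ (Z ω ≠ 0 → 0 < g ω) := by
    filter_upwards [hτ] with ω hω
    have h1 : 0 < a₁ - Z ω := by linarith
    have h2 : 0 < a₂ - Z ω := by linarith
    have h3 : 0 < b₁ - Z ω := by linarith
    have h4 : 0 < b₂ - Z ω := by linarith
    have hle : (a₁ - Z ω) * (a₂ - Z ω) ≤ (b₁ - Z ω) * (b₂ - Z ω) := by nlinarith
    constructor
    · have := div_le_div_of_nonneg_left (by positivity : (0:ℝ) ≤ Z ω ^ 2)
        (by positivity) hle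
      simpa [hg] using sub_nonneg.mpr this
    · intro hz
      have hzpos : 0 < Z ω ^ 2 := by positivity
      have hlt : (a₁ - Z ω) * (a₂ - Z ω) < (b₁ - Z ω) * (b₂ - Z ω) := by
        rcases hstrict with h | h <;> nlinarith
      have := div_lt_div_of_pos_left hzpos (by positivity) hlt
      simpa [hg] using sub_pos.mpr this
  have hgint : Integrable g ℙ := hIa.sub hIb
  have hpos : 0 < ∫ ω, g ω ∂ℙ := by
    rw [integral_pos_iff_support_of_nonneg_ae
      (by filter_upwards [hkey] with ω h using h.1) hgint]
    refine lt_of_lt_of_le hZne (measure_mono_ae ?_)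
    filter_upwards [hkey] with ω h hz
    exact Function.mem_support.mpr (ne_of_gt (h.2 hz))
  have := integral_sub hIa hIb
  rw [show (fun a => (fun ω => Z ω ^ 2 / ((a₁ - Z ω) * (a₂ - Z ω))) a -
      (fun ω => Z ω ^ 2 / ((b₁ - Z ω) * (b₂ - Z ω))) a) = g from rfl] at this
  linarith [this ▸ hpos]

end Aux

/-- If `λ̄ ∈ (τ,∞)` satisfies `𝔼[(Z/(λ̄−Z))²] = 1/Δ`, then `λ̄` is the unique global
minimizer of `ψ(·;Δ)` on `(τ,∞)`: `ψ(·;Δ)` is strictly decreasing on `(τ, λ̄]`,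
strictly increasing on `[λ̄, ∞)`, and `ψ(λ;Δ) > ψ(λ̄;Δ)` for `λ ∈ (τ,∞)`, `λ ≠ λ̄`. -/
theorem psi_unique_min
    {Ω : Type*} [MeasureSpace Ω] [IsProbabilityMeasure (ℙ : Measure Ω)]
    (G Z : Ω → ℝ) (hGmeas : Measurable G) (hZmeas : Measurable Z)
    (hG : Measure.map G ℙ = gaussianReal 0 1)
    (hZbdd : ∃ C : ℝ, ∀ᵐ ω ∂ℙ, |Z ω| ≤ C)
    (τ : ℝ) (hτ : τ = essSup Z ℙ) (hτpos : 0 < τ)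
    (hZ0 : ℙ {ω | Z ω = 0} < 1)
    (ψ : ℝ → ℝ → ℝ)
    (hψ : ∀ (lam Δ : ℝ), ψ lam Δ = lam * (1 / Δ + ∫ ω, Z ω / (lam - Z ω) ∂ℙ))
    (Δ : ℝ) (hΔ : 0 < Δ)
    (lamBar : ℝ) (hlamBar : lamBar ∈ Set.Ioi τ)
    (hstat : ∫ ω, (Z ω / (lamBar - Z ω)) ^ 2 ∂ℙ = 1 / Δ) :
    StrictAntiOn (fun l => ψ l Δ) (Set.Ioc τ lamBar) ∧
    StrictMonoOn (fun l => ψ l Δ) (Set.Ici lamBar) ∧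
    ∀ lam ∈ Set.Ioi τ, lam ≠ lamBar → ψ lamBar Δ < ψ lam Δ := by
  obtain ⟨C, hC⟩ := hZbdd
  have hτae : ∀ᵐ ω ∂ℙ, Z ω ≤ τ := by
    rw [hτ]
    exact ae_le_essSup ⟨C, eventually_map.2 (hC.mono fun ω h => le_of_abs_le h)⟩
  have hlamBar' : τ < lamBar := hlamBar
  -- positive measure of {Z ≠ 0}
  have hZne : 0 < ℙ {ω | Z ω ≠ 0} := by
    have hmeas : MeasurableSet {ω | Z ω = 0} := hZmeas (measurableSet_singleton 0)
    have : ℙ {ω | Z ω = 0}ᶜ = 1 - ℙ {ω | Z ω = 0} := prob_compl_eq_one_sub hmeas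
    have hne : {ω | Z ω ≠ 0} = {ω | Z ω = 0}ᶜ := rfl
    rw [hne, this]
    exact tsub_pos_of_lt hZ0
  -- the stationarity condition rewritten
  have hstat' : ∫ ω, Z ω ^ 2 / ((lamBar - Z ω) * (lamBar - Z ω)) ∂ℙ = 1 / Δ := by
    rw [← hstat]
    apply integral_congr_ae
    filter_upwards with ω
    rw [div_pow, ← pow_two]
  -- strict anti on Ioc
  have hanti : StrictAntiOn (fun l => ψ l Δ) (Set.Ioc τ lamBar) := by
    intro a ha b hb hab
    have hdiff := my_psi_diff hZmeas hC hτae ψ hψ Δ ha.1 (lt_trans ha.1 hab)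
    have hI : 1 / Δ < ∫ ω, Z ω ^ 2 / ((a - Z ω) * (b - Z ω)) ∂ℙ := by
      rw [← hstat']
      exact my_I_strict hZmeas hC hτae hZne ha.1 (lt_trans ha.1 hab)
        (le_trans hab.le hb.2) hb.2 (Or.inl (lt_of_lt_of_le hab hb.2))
    nlinarith [hdiff]
  -- strict mono on Ici
  have hmono : StrictMonoOn (fun l => ψ l Δ) (Set.Ici lamBar) := by
    intro a ha b hb hab
    have h1 : τ < a := lt_of_lt_of_le hlamBar' ha
    have hdiff := my_psi_diff hZmeas hC hτae ψ hψ Δ h1 (lt_trans h1 hab)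
    have hI : ∫ ω, Z ω ^ 2 / ((a - Z ω) * (b - Z ω)) ∂ℙ < 1 / Δ := by
      rw [← hstat']
      exact my_I_strict hZmeas hC hτae hZne hlamBar' hlamBar' ha
        hb (Or.inr (lt_of_le_of_lt ha hab))
    nlinarith [hdiff]
  refine ⟨hanti, hmono, fun lam hlam hne => ?_⟩
  rcases lt_or_gt_of_ne hne with h | h
  · exact hanti ⟨hlam, h.le⟩ ⟨hlamBar', le_refl _⟩ h
  · exact hmono (show lamBar ≤ lamBar from le_refl _) h.le h
end

section
/- Let δ₁ > δ₂ > 0 and suppose λ̄(δ₁), λ̄(δ₂) ∈ (τ, ∞) satisfy 𝔼[(Z/(λ̄(δᵢ)−Z))²] = 1/δᵢ for i = 1, 2. Define ζ(λ; δᵢ) := ψ(max{λ, λ̄(δᵢ)}; δᵢ) for λ > τ. Then ζ(λ; δ₁) < ζ(λ; δ₂) for every λ > τ. -/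
open MeasureTheory ProbabilityTheory Real Set Filter

/-- For `δ₁ > δ₂ > 0` with respective stationary points `λ̄(δ₁), λ̄(δ₂) ∈ (τ,∞)`,
the functions `ζ(λ; δᵢ) = ψ(max{λ, λ̄(δᵢ)}; δᵢ)` satisfy `ζ(λ;δ₁) < ζ(λ;δ₂)`
for every `λ > τ`. -/
theorem zeta_ordering
    {Ω : Type*} [MeasureSpace Ω] [IsProbabilityMeasure (ℙ : Measure Ω)]
    (G Z : Ω → ℝ) (hGmeas : Measurable G) (hZmeas : Measurable Z)
    (hG : Measure.map G ℙ = gaussianReal 0 1)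
    (hZbdd : ∃ C : ℝ, ∀ᵐ ω ∂ℙ, |Z ω| ≤ C)
    (τ : ℝ) (hτ : τ = essSup Z ℙ) (hτpos : 0 < τ)
    (hZ0 : ℙ {ω | Z ω = 0} < 1)
    (ψ : ℝ → ℝ → ℝ)
    (hψ : ∀ (lam Δ : ℝ), ψ lam Δ = lam * (1 / Δ + ∫ ω, Z ω / (lam - Z ω) ∂ℙ))
    (δ₁ δ₂ : ℝ) (hδ₂ : 0 < δ₂) (hδ : δ₂ < δ₁)
    (lamBar₁ lamBar₂ : ℝ)
    (hlamBar₁ : lamBar₁ ∈ Set.Ioi τ) (hlamBar₂ : lamBar₂ ∈ Set.Ioi τ)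
    (hstat₁ : ∫ ω, (Z ω / (lamBar₁ - Z ω)) ^ 2 ∂ℙ = 1 / δ₁)
    (hstat₂ : ∫ ω, (Z ω / (lamBar₂ - Z ω)) ^ 2 ∂ℙ = 1 / δ₂) :
    ∀ lam : ℝ, τ < lam → ψ (max lam lamBar₁) δ₁ < ψ (max lam lamBar₂) δ₂ := by
  obtain ⟨C, hC⟩ := hZbdd
  have hδ₁ : 0 < δ₁ := hδ₂.trans hδ
  have hB₁ : τ < lamBar₁ := hlamBar₁
  have hτZ : ∀ᵐ ω ∂ℙ, Z ω ≤ τ := by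
    rw [hτ]
    exact ae_le_essSup ⟨C, by rw [eventually_map]; exact hC.mono fun ω h => (abs_le.1 h).2⟩
  have hbound : ∀ (f : Ω → ℝ) (M : ℝ), Measurable f → (∀ᵐ ω ∂ℙ, |f ω| ≤ M) →
      Integrable f ℙ :=
    fun f M hf hM => (integrable_const M).mono' hf.aestronglyMeasurable (by simpa using hM)
  have hz2 : ∀ᵐ ω ∂ℙ, Z ω ^ 2 ≤ C ^ 2 := by
    filter_upwards [hC] with ω h1
    nlinarith [abs_nonneg (Z ω), sq_abs (Z ω)]
  have hIntJ : ∀ a b : ℝ, τ < a → τ < b →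
      Integrable (fun ω => Z ω ^ 2 / ((a - Z ω) * (b - Z ω))) ℙ := by
    intro a b ha hb
    refine hbound _ (C ^ 2 / ((a - τ) * (b - τ)))
      ((hZmeas.pow_const 2).div ((measurable_const.sub hZmeas).mul
        (measurable_const.sub hZmeas))) ?_
    filter_upwards [hz2, hτZ] with ω h1 h2
    have haz : 0 < a - Z ω := by linarith
    have hbz : 0 < b - Z ω := by linarith
    have haτ : 0 < a - τ := by linarith
    have hbτ : 0 < b - τ := by linarith
    rw [abs_of_nonneg (div_nonneg (sq_nonneg _) (mul_pos haz hbz).le)]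
    exact div_le_div₀ (by positivity) h1 (mul_pos haτ hbτ)
      (mul_le_mul (by linarith) (by linarith) hbτ.le haz.le)
  have hIntI : ∀ a : ℝ, τ < a → Integrable (fun ω => Z ω ^ 2 / (a - Z ω)) ℙ := by
    intro a ha
    refine hbound _ (C ^ 2 / (a - τ))
      ((hZmeas.pow_const 2).div (measurable_const.sub hZmeas)) ?_
    filter_upwards [hz2, hτZ] with ω h1 h2
    have haz : 0 < a - Z ω := by linarith
    have haτ : 0 < a - τ := by linarith
    rw [abs_of_nonneg (div_nonneg (sq_nonneg _) haz.le)]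
    exact div_le_div₀ (by positivity) h1 haτ (by linarith)
  have hIntZ : Integrable Z ℙ := hbound Z C hZmeas hC
  -- rewrite ψ
  have hψ' : ∀ a d : ℝ, τ < a →
      ψ a d = a / d + (∫ ω, Z ω ∂ℙ) + ∫ ω, Z ω ^ 2 / (a - Z ω) ∂ℙ := by
    intro a d ha
    have h1 : (∫ ω, a * (Z ω / (a - Z ω)) ∂ℙ)
        = (∫ ω, Z ω ∂ℙ) + ∫ ω, Z ω ^ 2 / (a - Z ω) ∂ℙ := by
      rw [← integral_add hIntZ (hIntI a ha)]
      refine integral_congr_ae ?_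
      filter_upwards [hτZ] with ω h2
      have h3 : a - Z ω ≠ 0 := ne_of_gt (by linarith)
      field_simp
      ring
    rw [hψ, mul_add, mul_one_div, ← integral_const_mul, h1, add_assoc]
  -- key identity
  have hkey : ∀ a b : ℝ, τ < a → τ < b →
      (∫ ω, Z ω ^ 2 / (a - Z ω) ∂ℙ)
        = (∫ ω, Z ω ^ 2 / (b - Z ω) ∂ℙ)
          + (b - a) * ∫ ω, Z ω ^ 2 / ((a - Z ω) * (b - Z ω)) ∂ℙ := by
    intro a b ha hb
    rw [← integral_const_mul, ← integral_add (hIntI b hb) ((hIntJ a b ha hb).const_mul _)]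
    refine integral_congr_ae ?_
    filter_upwards [hτZ] with ω h2
    have h3 : a - Z ω ≠ 0 := ne_of_gt (by linarith)
    have h4 : b - Z ω ≠ 0 := ne_of_gt (by linarith)
    field_simp
    ring
  -- monotonicity in the first slot
  have hmono : ∀ a b c : ℝ, τ < a → a ≤ b → τ < c →
      (∫ ω, Z ω ^ 2 / ((b - Z ω) * (c - Z ω)) ∂ℙ)
        ≤ ∫ ω, Z ω ^ 2 / ((a - Z ω) * (c - Z ω)) ∂ℙ := by
    intro a b c ha hab hc
    refine integral_mono_ae (hIntJ b c (ha.trans_le hab) hc) (hIntJ a c ha hc) ?_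
    filter_upwards [hτZ] with ω h2
    have h3 : 0 < a - Z ω := by linarith
    have h4 : 0 < c - Z ω := by linarith
    exact div_le_div_of_nonneg_left (sq_nonneg _) (mul_pos h3 h4) (by nlinarith)
  have hcomm : ∀ a b : ℝ,
      (∫ ω, Z ω ^ 2 / ((a - Z ω) * (b - Z ω)) ∂ℙ)
        = ∫ ω, Z ω ^ 2 / ((b - Z ω) * (a - Z ω)) ∂ℙ := by
    intro a b
    congr 1
    funext ω
    rw [mul_comm]
  have hstat₁' : (∫ ω, Z ω ^ 2 / ((lamBar₁ - Z ω) * (lamBar₁ - Z ω)) ∂ℙ) = 1 / δ₁ := by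
    rw [← hstat₁]
    congr 1
    funext ω
    rw [div_pow, pow_two (lamBar₁ - Z ω)]
  intro lam hlam
  set μ₁ := max lam lamBar₁ with hμ₁def
  set μ₂ := max lam lamBar₂ with hμ₂def
  have hτμ₁ : τ < μ₁ := lt_max_of_lt_left hlam
  have hτμ₂ : τ < μ₂ := lt_max_of_lt_left hlam
  have hμ₂pos : 0 < μ₂ := hτpos.trans hτμ₂
  rw [hψ' μ₁ δ₁ hτμ₁, hψ' μ₂ δ₂ hτμ₂]
  have hstrict : μ₂ / δ₁ < μ₂ / δ₂ := div_lt_div_of_pos_left hμ₂pos hδ₂ hδ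
  rcases le_or_gt μ₁ μ₂ with hle | hlt
  · have hk := hkey μ₁ μ₂ hτμ₁ hτμ₂
    have hJle : (∫ ω, Z ω ^ 2 / ((μ₁ - Z ω) * (μ₂ - Z ω)) ∂ℙ) ≤ 1 / δ₁ := by
      calc (∫ ω, Z ω ^ 2 / ((μ₁ - Z ω) * (μ₂ - Z ω)) ∂ℙ)
          = ∫ ω, Z ω ^ 2 / ((μ₂ - Z ω) * (μ₁ - Z ω)) ∂ℙ := hcomm _ _
        _ ≤ ∫ ω, Z ω ^ 2 / ((μ₁ - Z ω) * (μ₁ - Z ω)) ∂ℙ := hmono μ₁ μ₂ μ₁ hτμ₁ hle hτμ₁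
        _ ≤ ∫ ω, Z ω ^ 2 / ((lamBar₁ - Z ω) * (μ₁ - Z ω)) ∂ℙ :=
            hmono lamBar₁ μ₁ μ₁ hB₁ (le_max_right _ _) hτμ₁
        _ = ∫ ω, Z ω ^ 2 / ((μ₁ - Z ω) * (lamBar₁ - Z ω)) ∂ℙ := hcomm _ _
        _ ≤ ∫ ω, Z ω ^ 2 / ((lamBar₁ - Z ω) * (lamBar₁ - Z ω)) ∂ℙ :=
            hmono lamBar₁ μ₁ lamBar₁ hB₁ (le_max_right _ _) hB₁
        _ = 1 / δ₁ := hstat₁'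
    have hJmul : (μ₂ - μ₁) * (∫ ω, Z ω ^ 2 / ((μ₁ - Z ω) * (μ₂ - Z ω)) ∂ℙ)
        ≤ (μ₂ - μ₁) * (1 / δ₁) := mul_le_mul_of_nonneg_left hJle (by linarith)
    have h1 : (μ₂ - μ₁) * (1 / δ₁) = μ₂ / δ₁ - μ₁ / δ₁ := by ring
    linarith
  · have hlam₁ : lam ≤ lamBar₁ := by
      by_contra h
      push_neg at h
      have h2 : μ₁ = lam := max_eq_left h.le
      have h3 : lam ≤ μ₂ := le_max_left _ _
      rw [h2] at hlt
      linarith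
    have hμ₁eq : μ₁ = lamBar₁ := max_eq_right hlam₁
    have hk := hkey μ₂ μ₁ hτμ₂ hτμ₁
    have hJge : 1 / δ₁ ≤ ∫ ω, Z ω ^ 2 / ((μ₂ - Z ω) * (μ₁ - Z ω)) ∂ℙ := by
      calc 1 / δ₁ = ∫ ω, Z ω ^ 2 / ((lamBar₁ - Z ω) * (lamBar₁ - Z ω)) ∂ℙ := hstat₁'.symm
        _ = ∫ ω, Z ω ^ 2 / ((μ₁ - Z ω) * (μ₁ - Z ω)) ∂ℙ := by rw [hμ₁eq]
        _ ≤ ∫ ω, Z ω ^ 2 / ((μ₂ - Z ω) * (μ₁ - Z ω)) ∂ℙ := hmono μ₂ μ₁ μ₁ hτμ₂ hlt.le hτμ₁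
    have hJmul : (μ₁ - μ₂) * (1 / δ₁)
        ≤ (μ₁ - μ₂) * ∫ ω, Z ω ^ 2 / ((μ₂ - Z ω) * (μ₁ - Z ω)) ∂ℙ :=
      mul_le_mul_of_nonneg_left hJge (by linarith)
    have h1 : (μ₁ - μ₂) * (1 / δ₁) = μ₁ / δ₁ - μ₂ / δ₁ := by ring
    linarith
end

section
/- Assume additionally ℙ(Z·G ≠ 0) > 0. Let δ₁ > δ₂ > 0, suppose λ̄(δ₁), λ̄(δ₂) ∈ (τ, ∞) satisfy 𝔼[(Z/(λ̄(δᵢ)−Z))²] = 1/δᵢ, and define ζ(λ; δᵢ) := ψ(max{λ, λ̄(δᵢ)}; δᵢ). If λ*(δ₁), λ*(δ₂) ∈ (τ, ∞) satisfy ζ(λ*(δ₁); δ₁) = φ(λ*(δ₁)) and ζ(λ*(δ₂); δ₂) = φ(λ*(δ₂)), then λ*(δ₁) > λ*(δ₂). -/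
open MeasureTheory ProbabilityTheory Real Set Filter

set_option maxHeartbeats 1000000 in
private lemma gauss_sq_integrable {Ω : Type*} [MeasureSpace Ω]
    [IsProbabilityMeasure (ℙ : Measure Ω)] {G : Ω → ℝ} (hGmeas : Measurable G)
    (hG : Measure.map G ℙ = gaussianReal 0 1) :
    Integrable (fun ω => (G ω) ^ 2) ℙ := by
  have h1 : Integrable (fun x : ℝ => x ^ 2) (gaussianReal 0 1) := by
    rw [gaussianReal_of_var_ne_zero 0 one_ne_zero,
      integrable_withDensity_iff (measurable_gaussianPDF 0 1)
        (ae_of_all _ fun x => ENNReal.ofReal_lt_top)]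
    have hcomp : ∀ x : ℝ, x ^ 2 * (gaussianPDF 0 1 x).toReal
        = x ^ 2 * ((√(2 * π))⁻¹ * rexp (- x ^ 2 / 2)) := by
      intro x
      rw [gaussianPDF, ENNReal.toReal_ofReal (gaussianPDFReal_nonneg 0 1 x)]
      simp [gaussianPDFReal]
    refine (((integrable_exp_neg_mul_sq (by norm_num : (0:ℝ) < 1/4)).const_mul
      (4 * (√(2 * π))⁻¹)).mono' ?_ ?_)
    · refine Measurable.aestronglyMeasurable ?_
      exact (measurable_id.pow_const 2).mul
        ((measurable_gaussianPDF 0 1).ennreal_toReal)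
    · refine ae_of_all _ fun x => ?_
      rw [hcomp]
      have hx : x ^ 2 ≤ 4 * rexp (x ^ 2 / 4) := by
        have := Real.add_one_le_exp (x ^ 2 / 4)
        nlinarith [sq_nonneg x, Real.exp_pos (x ^ 2 / 4)]
      have hsqrt : (0:ℝ) < √(2 * π) := Real.sqrt_pos.2 (by positivity)
      rw [Real.norm_eq_abs, abs_mul, abs_of_nonneg (sq_nonneg x),
        abs_of_nonneg (by positivity : (0:ℝ) ≤ (√(2 * π))⁻¹ * rexp (- x ^ 2 / 2))]
      have h2 : x ^ 2 * ((√(2 * π))⁻¹ * rexp (- x ^ 2 / 2))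
          ≤ (4 * rexp (x ^ 2 / 4)) * ((√(2 * π))⁻¹ * rexp (- x ^ 2 / 2)) := by
        apply mul_le_mul_of_nonneg_right hx (by positivity)
      refine h2.trans (le_of_eq ?_)
      rw [show -(1/4 : ℝ) * x ^ 2 = x ^ 2 / 4 + (- x ^ 2 / 2) by ring, Real.exp_add]
      ring
  have hmeas : AEStronglyMeasurable (fun x : ℝ => x ^ 2) (Measure.map G ℙ) :=
    (measurable_id.pow_const 2).aestronglyMeasurable
  exact (integrable_map_measure hmeas hGmeas.aemeasurable).mp (hG ▸ h1)

set_option maxHeartbeats 2000000 in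
/-- Assuming `ℙ(Z·G ≠ 0) > 0`: for `δ₁ > δ₂ > 0`, the fixed points `λ*(δᵢ) ∈ (τ,∞)` of
`ζ(λ; δᵢ) = φ(λ)` (with `ζ(λ;δᵢ) = ψ(max{λ, λ̄(δᵢ)}; δᵢ)`) satisfy `λ*(δ₁) > λ*(δ₂)`. -/
theorem lamStar_ordering
    {Ω : Type*} [MeasureSpace Ω] [IsProbabilityMeasure (ℙ : Measure Ω)]
    (G Z : Ω → ℝ) (hGmeas : Measurable G) (hZmeas : Measurable Z)
    (hG : Measure.map G ℙ = gaussianReal 0 1)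
    (hZbdd : ∃ C : ℝ, ∀ᵐ ω ∂ℙ, |Z ω| ≤ C)
    (τ : ℝ) (hτ : τ = essSup Z ℙ) (hτpos : 0 < τ)
    (hZ0 : ℙ {ω | Z ω = 0} < 1)
    (hZG : 0 < ℙ {ω | Z ω * G ω ≠ 0})
    (φ : ℝ → ℝ) (ψ : ℝ → ℝ → ℝ)
    (hφ : ∀ lam : ℝ, φ lam = lam * ∫ ω, Z ω * (G ω) ^ 2 / (lam - Z ω) ∂ℙ)
    (hψ : ∀ (lam Δ : ℝ), ψ lam Δ = lam * (1 / Δ + ∫ ω, Z ω / (lam - Z ω) ∂ℙ))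
    (δ₁ δ₂ : ℝ) (hδ₂ : 0 < δ₂) (hδ : δ₂ < δ₁)
    (lamBar₁ lamBar₂ : ℝ)
    (hlamBar₁ : lamBar₁ ∈ Set.Ioi τ) (hlamBar₂ : lamBar₂ ∈ Set.Ioi τ)
    (hstat₁ : ∫ ω, (Z ω / (lamBar₁ - Z ω)) ^ 2 ∂ℙ = 1 / δ₁)
    (hstat₂ : ∫ ω, (Z ω / (lamBar₂ - Z ω)) ^ 2 ∂ℙ = 1 / δ₂)
    (lamStar₁ lamStar₂ : ℝ)
    (hlamStar₁ : lamStar₁ ∈ Set.Ioi τ) (hlamStar₂ : lamStar₂ ∈ Set.Ioi τ)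
    (hsol₁ : ψ (max lamStar₁ lamBar₁) δ₁ = φ lamStar₁)
    (hsol₂ : ψ (max lamStar₂ lamBar₂) δ₂ = φ lamStar₂) :
    lamStar₂ < lamStar₁ := by
  classical
  obtain ⟨C₀, hC₀⟩ := hZbdd
  set C : ℝ := max C₀ 0 with hCdef
  have hCnn : (0:ℝ) ≤ C := le_max_right _ _
  rw [Set.mem_Ioi] at hlamBar₁ hlamBar₂ hlamStar₁ hlamStar₂
  have hgood : ∀ᵐ ω ∂ℙ, Z ω ≤ τ ∧ |Z ω| ≤ C := by
    have h1 : ∀ᵐ ω ∂ℙ, Z ω ≤ τ := by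
      rw [hτ]
      exact ae_le_essSup ⟨C₀, eventually_map.mpr (hC₀.mono fun ω h => (abs_le.1 h).2)⟩
    filter_upwards [h1, hC₀] with ω h1 h2 using ⟨h1, h2.trans (le_max_left _ _)⟩
  have hτlt : ∀ {μ : ℝ}, τ < μ →
      ∀ᵐ ω ∂ℙ, 0 < μ - Z ω ∧ μ - τ ≤ μ - Z ω ∧ |Z ω| ≤ C := by
    intro μ hμ
    filter_upwards [hgood] with ω h
    exact ⟨by linarith [h.1], by linarith [h.1], h.2⟩
  have hbdd_int : ∀ (f : Ω → ℝ), Measurable f → ∀ (M : ℝ),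
      (∀ᵐ ω ∂ℙ, |f ω| ≤ M) → Integrable f ℙ := fun f hf M h =>
    (integrable_const M).mono' hf.aestronglyMeasurable
      (by simpa [Real.norm_eq_abs] using h)
  -- integrability of the various integrands
  have int1 : ∀ {μ : ℝ}, τ < μ → Integrable (fun ω => Z ω / (μ - Z ω)) ℙ := by
    intro μ hμ
    refine hbdd_int _ (hZmeas.div (measurable_const.sub hZmeas)) (C / (μ - τ)) ?_
    filter_upwards [hτlt hμ] with ω ⟨h0, h1, h2⟩
    rw [abs_div, abs_of_pos h0]
    exact div_le_div₀ hCnn h2 (by linarith) h1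
  have int2 : ∀ {μ : ℝ}, τ < μ → Integrable (fun ω => (Z ω / (μ - Z ω)) ^ 2) ℙ := by
    intro μ hμ
    refine hbdd_int _ ((hZmeas.div (measurable_const.sub hZmeas)).pow_const 2)
      ((C / (μ - τ)) ^ 2) ?_
    filter_upwards [hτlt hμ] with ω ⟨h0, h1, h2⟩
    rw [abs_pow]
    refine pow_le_pow_left₀ (abs_nonneg _) ?_ 2
    rw [abs_div, abs_of_pos h0]
    exact div_le_div₀ hCnn h2 (by linarith) h1
  have int3 : ∀ {a b : ℝ}, τ < a → τ < b →
      Integrable (fun ω => (Z ω) ^ 2 / ((a - Z ω) * (b - Z ω))) ℙ := by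
    intro a b ha hb
    refine hbdd_int _ ((hZmeas.pow_const 2).div
      ((measurable_const.sub hZmeas).mul (measurable_const.sub hZmeas)))
      (C ^ 2 / ((a - τ) * (b - τ))) ?_
    filter_upwards [hτlt ha, hτlt hb] with ω ⟨ha0, ha1, hc⟩ ⟨hb0, hb1, _⟩
    rw [abs_div, abs_of_nonneg (sq_nonneg (Z ω)), abs_of_pos (mul_pos ha0 hb0)]
    refine div_le_div₀ (by positivity) ?_ (by nlinarith) ?_
    · nlinarith [abs_nonneg (Z ω), sq_abs (Z ω)]
    · nlinarith
  have intG : Integrable (fun ω => (G ω) ^ 2) ℙ := gauss_sq_integrable hGmeas hG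
  have int4 : ∀ {μ : ℝ}, τ < μ →
      Integrable (fun ω => Z ω * (G ω) ^ 2 / (μ - Z ω)) ℙ := by
    intro μ hμ
    have h := intG.bdd_mul (c := C / (μ - τ))
      (f := fun ω => Z ω / (μ - Z ω))
      (hZmeas.div (measurable_const.sub hZmeas)).aestronglyMeasurable ?_
    · exact h.congr (ae_of_all _ fun ω => by ring)
    · filter_upwards [hτlt hμ] with ω ⟨h0, h1, h2⟩
      rw [Real.norm_eq_abs, abs_div, abs_of_pos h0]
      exact div_le_div₀ hCnn h2 (by linarith) h1
  have int5 : ∀ {μ : ℝ}, τ < μ →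
      Integrable (fun ω => μ ^ 2 * Z ω / (μ - Z ω) ^ 2) ℙ := by
    intro μ hμ
    refine hbdd_int _ (((measurable_const.mul hZmeas)).div
      ((measurable_const.sub hZmeas).pow_const 2)) (μ ^ 2 * C / (μ - τ) ^ 2) ?_
    filter_upwards [hτlt hμ] with ω ⟨h0, h1, h2⟩
    rw [abs_div, abs_mul, abs_of_nonneg (sq_nonneg μ),
      abs_of_nonneg (sq_nonneg (μ - Z ω))]
    refine div_le_div₀ (mul_nonneg (sq_nonneg μ) hCnn) ?_ (pow_pos (by linarith) 2) ?_
    · exact mul_le_mul_of_nonneg_left h2 (sq_nonneg μ)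
    · exact pow_le_pow_left₀ (by linarith) h1 2
  -- monotonicity of H (μ ↦ ∫ (Z/(μ-Z))²)
  have Hmono : ∀ {a b : ℝ}, τ < a → a ≤ b →
      (∫ ω, (Z ω / (b - Z ω)) ^ 2 ∂ℙ) ≤ ∫ ω, (Z ω / (a - Z ω)) ^ 2 ∂ℙ := by
    intro a b ha hab
    have hb : τ < b := lt_of_lt_of_le ha hab
    refine integral_mono_ae (int2 hb) (int2 ha) ?_
    filter_upwards [hτlt ha, hτlt hb] with ω ⟨ha0, _, _⟩ ⟨hb0, _, _⟩
    rw [div_pow, div_pow]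
    exact div_le_div_of_nonneg_left (sq_nonneg _) (pow_pos ha0 2)
      (pow_le_pow_left₀ ha0.le (by linarith) 2)
  -- order of the lamBars
  have hBarlt : lamBar₂ < lamBar₁ := by
    by_contra h
    push_neg at h
    have h2 := Hmono hlamBar₁ h
    rw [hstat₁, hstat₂] at h2
    have h3 : 1 / δ₁ < 1 / δ₂ := one_div_lt_one_div_of_lt hδ₂ hδ
    linarith
  -- φ is antitone on (τ, ∞)
  have hφmono : ∀ {a b : ℝ}, τ < a → a ≤ b → φ b ≤ φ a := by
    intro a b ha hab
    have hb : τ < b := lt_of_lt_of_le ha hab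
    have key : φ a - φ b
        = ∫ ω, (b - a) * ((Z ω) ^ 2 * (G ω) ^ 2 / ((a - Z ω) * (b - Z ω))) ∂ℙ := by
      rw [hφ, hφ, ← integral_const_mul, ← integral_const_mul,
        ← integral_sub ((int4 ha).const_mul a) ((int4 hb).const_mul b)]
      refine integral_congr_ae ?_
      filter_upwards [hτlt ha, hτlt hb] with ω ⟨ha0, _, _⟩ ⟨hb0, _, _⟩
      have e1 : a - Z ω ≠ 0 := ne_of_gt ha0
      have e2 : b - Z ω ≠ 0 := ne_of_gt hb0
      field_simp
      ring
    have pos : 0 ≤ ∫ ω, (b - a) * ((Z ω) ^ 2 * (G ω) ^ 2 / ((a - Z ω) * (b - Z ω))) ∂ℙ := by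
      refine integral_nonneg_of_ae ?_
      filter_upwards [hτlt ha, hτlt hb] with ω ⟨ha0, _, _⟩ ⟨hb0, _, _⟩
      have h1 : (0:ℝ) ≤ b - a := by linarith
      positivity
    linarith
  -- ψ(·, δ) is monotone above lamBar when H lamBar = 1/δ
  have hψmono : ∀ {lamB δ : ℝ}, τ < lamB →
      (∫ ω, (Z ω / (lamB - Z ω)) ^ 2 ∂ℙ) = 1 / δ →
      ∀ {a b : ℝ}, lamB ≤ a → a ≤ b → ψ a δ ≤ ψ b δ := by
    intro lamB δ hB hstat a b hBa hab
    have ha : τ < a := lt_of_lt_of_le hB hBa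
    have hb : τ < b := lt_of_lt_of_le ha hab
    have hK : (∫ ω, (Z ω) ^ 2 / ((a - Z ω) * (b - Z ω)) ∂ℙ) ≤ 1 / δ := by
      rw [← hstat]
      refine integral_mono_ae (int3 ha hb) (int2 hB) ?_
      filter_upwards [hτlt hB, hτlt ha, hτlt hb] with ω ⟨hB0, _, _⟩ ⟨ha0, _, _⟩ ⟨hb0, _, _⟩
      rw [div_pow]
      refine div_le_div_of_nonneg_left (sq_nonneg _) (pow_pos hB0 2) ?_
      nlinarith
    have h2 : b * (∫ ω, Z ω / (b - Z ω) ∂ℙ) - a * (∫ ω, Z ω / (a - Z ω) ∂ℙ)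
        = -((b - a) * ∫ ω, (Z ω) ^ 2 / ((a - Z ω) * (b - Z ω)) ∂ℙ) := by
      rw [← integral_const_mul, ← integral_const_mul, ← integral_const_mul,
        ← integral_sub ((int1 hb).const_mul b) ((int1 ha).const_mul a), ← integral_neg]
      refine integral_congr_ae ?_
      filter_upwards [hτlt ha, hτlt hb] with ω ⟨ha0, _, _⟩ ⟨hb0, _, _⟩
      have e1 : a - Z ω ≠ 0 := ne_of_gt ha0
      have e2 : b - Z ω ≠ 0 := ne_of_gt hb0
      field_simp
      ring
    have key : ψ b δ - ψ a δ
        = (b - a) * (1 / δ - ∫ ω, (Z ω) ^ 2 / ((a - Z ω) * (b - Z ω)) ∂ℙ) := by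
      rw [hψ, hψ]
      linear_combination h2
    nlinarith [mul_nonneg (sub_nonneg.2 hab) (sub_nonneg.2 hK)]
  -- representation of ψ at lamBar
  have hrep : ∀ {lamB δ : ℝ}, τ < lamB →
      (∫ ω, (Z ω / (lamB - Z ω)) ^ 2 ∂ℙ) = 1 / δ →
      ψ lamB δ = ∫ ω, lamB ^ 2 * Z ω / (lamB - Z ω) ^ 2 ∂ℙ := by
    intro lamB δ hB hstat
    rw [hψ, ← hstat, ← integral_add (int2 hB) (int1 hB), ← integral_const_mul]
    refine integral_congr_ae ?_
    filter_upwards [hτlt hB] with ω ⟨h0, _, _⟩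
    have e1 : lamB - Z ω ≠ 0 := ne_of_gt h0
    field_simp
    ring
  -- strict decrease at the lamBars
  have hGdec : ψ lamBar₁ δ₁ < ψ lamBar₂ δ₂ := by
    rw [hrep hlamBar₁ hstat₁, hrep hlamBar₂ hstat₂]
    set d : Ω → ℝ := fun ω =>
      lamBar₂ ^ 2 * Z ω / (lamBar₂ - Z ω) ^ 2 - lamBar₁ ^ 2 * Z ω / (lamBar₁ - Z ω) ^ 2
      with hd_def
    have hdint : Integrable d ℙ := (int5 hlamBar₂).sub (int5 hlamBar₁)
    have hdkey : ∀ᵐ ω ∂ℙ, 0 ≤ d ω ∧ (Z ω ≠ 0 → 0 < d ω) := by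
      filter_upwards [hτlt hlamBar₁, hτlt hlamBar₂] with ω h1 h2
      obtain ⟨h10, -, -⟩ := h1
      obtain ⟨h20, -, -⟩ := h2
      have e1 : lamBar₁ - Z ω ≠ 0 := ne_of_gt h10
      have e2 : lamBar₂ - Z ω ≠ 0 := ne_of_gt h20
      have hfact : d ω = (Z ω) ^ 2 * ((lamBar₁ - lamBar₂)
          * (2 * lamBar₁ * lamBar₂ - Z ω * (lamBar₁ + lamBar₂)))
          / ((lamBar₁ - Z ω) ^ 2 * (lamBar₂ - Z ω) ^ 2) := by
        rw [hd_def]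
        field_simp
        ring
      have hA : (0:ℝ) < lamBar₁ - lamBar₂ := by linarith
      have hB : (0:ℝ) < 2 * lamBar₁ * lamBar₂ - Z ω * (lamBar₁ + lamBar₂) := by
        nlinarith [mul_pos (show (0:ℝ) < lamBar₁ by linarith) h20,
          mul_pos (show (0:ℝ) < lamBar₂ by linarith) h10]
      constructor
      · rw [hfact]
        positivity
      · intro hz
        rw [hfact]
        have hz2 : 0 < (Z ω) ^ 2 := sq_pos_of_ne_zero hz
        exact div_pos (mul_pos hz2 (mul_pos hA hB)) (by positivity)
    have hpos : 0 < ∫ ω, d ω ∂ℙ := by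
      rw [integral_pos_iff_support_of_nonneg_ae (hdkey.mono fun ω h => h.1) hdint]
      refine lt_of_lt_of_le hZG ?_
      have hsub1 : {ω | Z ω * G ω ≠ 0} ⊆ {ω | Z ω ≠ 0} := by
        intro ω h h0
        exact h (by rw [h0, zero_mul])
      have hsub2 : {ω | Z ω ≠ 0} ≤ᵐ[ℙ] Function.support d := by
        filter_upwards [hdkey] with ω h hz
        exact ne_of_gt (h.2 hz)
      exact le_trans (measure_mono hsub1) (measure_mono_ae hsub2)
    have hsub2 : (∫ ω, d ω ∂ℙ)
        = (∫ ω, lamBar₂ ^ 2 * Z ω / (lamBar₂ - Z ω) ^ 2 ∂ℙ)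
          - ∫ ω, lamBar₁ ^ 2 * Z ω / (lamBar₁ - Z ω) ^ 2 ∂ℙ :=
      integral_sub (int5 hlamBar₂) (int5 hlamBar₁)
    linarith
  -- key comparison at lamStar₁
  have hkey : φ lamStar₁ < ψ (max lamStar₁ lamBar₂) δ₂ := by
    rw [← hsol₁]
    rcases le_or_gt lamBar₁ lamStar₁ with h | h
    · rw [max_eq_left h, max_eq_left (le_trans hBarlt.le h)]
      rw [hψ, hψ]
      have h3 : 1 / δ₁ < 1 / δ₂ := one_div_lt_one_div_of_lt hδ₂ hδ
      have hpos : (0:ℝ) < lamStar₁ := by linarith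
      exact mul_lt_mul_of_pos_left (by linarith) hpos
    · rw [max_eq_right h.le]
      exact lt_of_lt_of_le hGdec (hψmono hlamBar₂ hstat₂ (le_refl _) (le_max_right _ _))
  -- conclusion
  by_contra hcon
  push_neg at hcon
  have h1 : φ lamStar₂ ≤ φ lamStar₁ := hφmono hlamStar₁ hcon
  have h2 : ψ (max lamStar₁ lamBar₂) δ₂ ≤ ψ (max lamStar₂ lamBar₂) δ₂ :=
    hψmono hlamBar₂ hstat₂ (le_max_right _ _) (max_le_max hcon (le_refl _))
  rw [hsol₂] at h2
  linarith
end

section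
/- Fix δ > 0 and suppose λ̄(δ) ∈ (τ, ∞) satisfies 𝔼[(Z/(λ̄(δ)−Z))²] = 1/δ; define ζ(λ; δ) := ψ(max{λ, λ̄(δ)}; δ). Then for any reals λ₁ > λ₂ > τ: (1) if λ₂ > λ̄(δ), then ζ(λ₁; δ) > ζ(λ₂; δ) > ζ(λ̄(δ); δ); (2) if λ₁ > λ̄(δ) ≥ λ₂, then ζ(λ₁; δ) > ζ(λ₂; δ) = ζ(λ̄(δ); δ); (3) if λ̄(δ) ≥ λ₁, then ζ(λ₁; δ) = ζ(λ₂; δ) = ζ(λ̄(δ); δ). -/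
open MeasureTheory ProbabilityTheory Real Set Filter

/-- Monotonicity properties of `ζ(λ;δ) = ψ(max{λ, λ̄(δ)}; δ)`: for `λ₁ > λ₂ > τ`,
(1) if `λ₂ > λ̄(δ)` then `ζ(λ₁;δ) > ζ(λ₂;δ) > ζ(λ̄(δ);δ)`;
(2) if `λ₁ > λ̄(δ) ≥ λ₂` then `ζ(λ₁;δ) > ζ(λ₂;δ) = ζ(λ̄(δ);δ)`;
(3) if `λ̄(δ) ≥ λ₁` then `ζ(λ₁;δ) = ζ(λ₂;δ) = ζ(λ̄(δ);δ)`. -/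
theorem zeta_cases
    {Ω : Type*} [MeasureSpace Ω] [IsProbabilityMeasure (ℙ : Measure Ω)]
    (G Z : Ω → ℝ) (hGmeas : Measurable G) (hZmeas : Measurable Z)
    (hG : Measure.map G ℙ = gaussianReal 0 1)
    (hZbdd : ∃ C : ℝ, ∀ᵐ ω ∂ℙ, |Z ω| ≤ C)
    (τ : ℝ) (hτ : τ = essSup Z ℙ) (hτpos : 0 < τ)
    (hZ0 : ℙ {ω | Z ω = 0} < 1)
    (ψ : ℝ → ℝ → ℝ)
    (hψ : ∀ (lam Δ : ℝ), ψ lam Δ = lam * (1 / Δ + ∫ ω, Z ω / (lam - Z ω) ∂ℙ))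
    (δ : ℝ) (hδ : 0 < δ)
    (lamBar : ℝ) (hlamBar : lamBar ∈ Set.Ioi τ)
    (hstat : ∫ ω, (Z ω / (lamBar - Z ω)) ^ 2 ∂ℙ = 1 / δ)
    (ζ : ℝ → ℝ) (hζ : ∀ lam : ℝ, ζ lam = ψ (max lam lamBar) δ) :
    ∀ lam₁ lam₂ : ℝ, τ < lam₂ → lam₂ < lam₁ →
      (lamBar < lam₂ → ζ lamBar < ζ lam₂ ∧ ζ lam₂ < ζ lam₁) ∧
      (lamBar < lam₁ → lam₂ ≤ lamBar → ζ lam₂ < ζ lam₁ ∧ ζ lam₂ = ζ lamBar) ∧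
      (lam₁ ≤ lamBar → ζ lam₁ = ζ lamBar ∧ ζ lam₂ = ζ lamBar) := by
  obtain ⟨C, hC⟩ := hZbdd
  have hτB : τ < lamBar := hlamBar
  have hCnn : 0 ≤ C := by
    obtain ⟨ω, hω⟩ := hC.exists
    exact (abs_nonneg _).trans hω
  have hZτ : ∀ᵐ ω ∂ℙ, Z ω ≤ τ := by
    rw [hτ]
    exact ae_le_essSup ⟨C, by
      rw [Filter.eventually_map]
      filter_upwards [hC] with ω h using le_of_abs_le h⟩
  -- integrability of Z/(lam - Z) for lam > τ
  have hint : ∀ lam : ℝ, τ < lam → Integrable (fun ω => Z ω / (lam - Z ω)) ℙ := by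
    intro lam hlam
    refine Integrable.mono' (integrable_const (C / (lam - τ)))
      ((hZmeas.div (measurable_const.sub hZmeas)).aestronglyMeasurable) ?_
    filter_upwards [hC, hZτ] with ω h1 h2
    have h4 : 0 < lam - τ := by linarith
    have h3 : lam - τ ≤ lam - Z ω := by linarith
    rw [Real.norm_eq_abs, abs_div, abs_of_pos (lt_of_lt_of_le h4 h3)]
    exact div_le_div₀ hCnn h1 h4 h3
  -- the quadratic integrand
  set q : ℝ → ℝ → Ω → ℝ := fun a b ω => Z ω ^ 2 / ((a - Z ω) * (b - Z ω)) with hq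
  have hqint : ∀ a b : ℝ, τ < a → τ < b → Integrable (q a b) ℙ := by
    intro a b ha hb
    refine Integrable.mono' (integrable_const (C ^ 2 / ((a - τ) * (b - τ))))
      (((hZmeas.pow_const 2).div
        ((measurable_const.sub hZmeas).mul (measurable_const.sub hZmeas))).aestronglyMeasurable) ?_
    filter_upwards [hC, hZτ] with ω h1 h2
    have ha1 : 0 < a - τ := by linarith
    have hb1 : 0 < b - τ := by linarith
    have ha2 : a - τ ≤ a - Z ω := by linarith
    have hb2 : b - τ ≤ b - Z ω := by linarith
    rw [Real.norm_eq_abs, hq, abs_div, abs_of_pos (mul_pos (lt_of_lt_of_le ha1 ha2) (lt_of_lt_of_le hb1 hb2))]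
    have hZ2 : |Z ω ^ 2| ≤ C ^ 2 := by
      rw [abs_pow] ; exact pow_le_pow_left₀ (abs_nonneg _) h1 2
    exact div_le_div₀ (by positivity) hZ2 (by positivity)
      (mul_le_mul ha2 hb2 hb1.le (by linarith))
  have hqbar : ∫ ω, q lamBar lamBar ω ∂ℙ = 1 / δ := by
    rw [← hstat]
    refine integral_congr_ae (Eventually.of_forall fun ω => ?_)
    simp only [hq]
    rw [div_pow, pow_two (lamBar - Z ω)]
  -- strict comparison of quadratic integrals
  have hqlt : ∀ a b : ℝ, lamBar ≤ b → lamBar < a →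
      ∫ ω, q a b ω ∂ℙ < 1 / δ := by
    intro a b hb ha
    have hτa : τ < a := lt_trans hτB ha
    have hτb : τ < b := lt_of_lt_of_le hτB hb
    set h : Ω → ℝ := fun ω => q lamBar lamBar ω - q a b ω with hh
    have hhint : Integrable h ℙ := (hqint lamBar lamBar hτB hτB).sub (hqint a b hτa hτb)
    have hnonneg : 0 ≤ᵐ[ℙ] h := by
      filter_upwards [hZτ] with ω h2
      have h1 : 0 < lamBar - Z ω := by linarith
      have h3 : 0 < b - Z ω := by linarith
      have : q a b ω ≤ q lamBar lamBar ω := by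
        apply div_le_div_of_nonneg_left (by positivity) (by positivity)
        exact mul_le_mul (by linarith) (by linarith) h1.le (by linarith)
      simpa [hh] using sub_nonneg.2 this
    have hsupp : {ω | Z ω ≠ 0} ∩ {ω | Z ω ≤ τ} ⊆ Function.support h := by
      rintro ω ⟨hω1, hω2⟩
      simp only [Set.mem_setOf_eq] at hω1 hω2
      have h1 : 0 < lamBar - Z ω := by linarith
      have h3 : 0 < b - Z ω := by linarith
      have hlt : q a b ω < q lamBar lamBar ω := by
        apply div_lt_div_of_pos_left
          (by rw [← sq_abs]; exact pow_pos (abs_pos.mpr hω1) 2) (by positivity)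
        have : lamBar - Z ω < a - Z ω := by linarith
        nlinarith
      have : 0 < h ω := sub_pos.2 hlt
      exact fun hc => by rw [hc] at this; exact lt_irrefl 0 this
    have hμ : 0 < ℙ (Function.support h) := by
      have hmeasle : ℙ {ω | Z ω ≤ τ}ᶜ = 0 := by
        have h' := hZτ
        rw [ae_iff] at h'
        simpa [Set.compl_setOf] using h'
      have hne : ℙ {ω | Z ω ≠ 0} = 1 - ℙ {ω | Z ω = 0} := by
        have : ({ω | Z ω ≠ 0} : Set Ω) = {ω | Z ω = 0}ᶜ := rfl
        rw [this]
        exact prob_compl_eq_one_sub (hZmeas (measurableSet_singleton 0))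
      have hnpos : 0 < ℙ {ω | Z ω ≠ 0} := by
        rw [hne]
        exact tsub_pos_of_lt hZ0
      have hinter : ℙ ({ω | Z ω ≠ 0} ∩ {ω | Z ω ≤ τ}) = ℙ {ω | Z ω ≠ 0} :=
        measure_inter_conull hmeasle
      calc (0:ENNReal) < ℙ ({ω | Z ω ≠ 0} ∩ {ω | Z ω ≤ τ}) := by rw [hinter]; exact hnpos
        _ ≤ ℙ (Function.support h) := measure_mono hsupp
    have hpos : 0 < ∫ ω, h ω ∂ℙ :=
      (integral_pos_iff_support_of_nonneg_ae hnonneg hhint).2 hμ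
    have hps : 0 < (∫ ω, q lamBar lamBar ω ∂ℙ) - ∫ ω, q a b ω ∂ℙ := by
      rw [← integral_sub (hqint lamBar lamBar hτB hτB) (hqint a b hτa hτb)]
      exact hpos
    rw [hqbar] at hps
    linarith
  -- main monotonicity
  have main : ∀ a b : ℝ, lamBar ≤ b → b < a → ψ b δ < ψ a δ := by
    intro a b hb hba
    have hτa : τ < a := lt_of_lt_of_le hτB (hb.trans hba.le)
    have hτb : τ < b := lt_of_lt_of_le hτB hb
    have hfa := hint a hτa
    have hfb := hint b hτb
    have hkey : a * ∫ ω, Z ω / (a - Z ω) ∂ℙ - b * ∫ ω, Z ω / (b - Z ω) ∂ℙ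
        = -(a - b) * ∫ ω, q a b ω ∂ℙ := by
      rw [← integral_const_mul a, ← integral_const_mul b,
        ← integral_sub (hfa.const_mul a) (hfb.const_mul b), ← integral_const_mul]
      refine integral_congr_ae ?_
      filter_upwards [hZτ] with ω h2
      have h1 : (0:ℝ) < a - Z ω := by linarith
      have h3 : (0:ℝ) < b - Z ω := by linarith
      simp only [hq]
      field_simp
      ring
    have hψa := hψ a δ
    have hψb := hψ b δ
    have hq1 : ∫ ω, q a b ω ∂ℙ < 1 / δ := hqlt a b hb (lt_of_le_of_lt hb hba)
    have hab : 0 < a - b := by linarith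
    nlinarith [hkey, hψa, hψb]
  -- case analysis
  intro lam₁ lam₂ hτ2 h21
  have hζbar : ζ lamBar = ψ lamBar δ := by rw [hζ, max_self]
  refine ⟨?_, ?_, ?_⟩
  · intro h
    have h1 : lamBar < lam₁ := h.trans h21
    rw [hζ lam₁, hζ lam₂, max_eq_left h1.le, max_eq_left h.le, hζbar]
    exact ⟨main lam₂ lamBar le_rfl h, main lam₁ lam₂ h.le h21⟩
  · intro h1 h2
    rw [hζ lam₁, hζ lam₂, max_eq_left h1.le, max_eq_right h2, hζbar]
    exact ⟨main lam₁ lamBar le_rfl h1, rfl⟩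
  · intro h1
    rw [hζ lam₁, hζ lam₂, max_eq_right h1, max_eq_right (h21.le.trans h1), hζbar]
    exact ⟨rfl, rfl⟩
end

section
/- Assume additionally ℙ(Z·G ≠ 0) > 0. Let 0 < δᵢ < δ, suppose λ̄(δ), λ̄(δᵢ) ∈ (τ, ∞) satisfy 𝔼[(Z/(λ̄(δ)−Z))²] = 1/δ and 𝔼[(Z/(λ̄(δᵢ)−Z))²] = 1/δᵢ, define ζ(λ; δᵢ) := ψ(max{λ, λ̄(δᵢ)}; δᵢ), and let λ* ∈ (τ, ∞) be the unique solution of ζ(λ; δᵢ) = φ(λ). Then the following are equivalent: (1) λ* > λ̄(δ); (2) ψ(λ̄(δ); δᵢ) < φ(λ̄(δ)); (3) ζ(λ*; δᵢ) > ζ(λ̄(δ); δᵢ); (4) 1/δ > 𝔼[(Z/(λ*−Z))²], i.e. ∂ψ/∂λ(λ*; δ) > 0. -/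
open MeasureTheory ProbabilityTheory Real Set Filter

lemma aux_div_le_div_left {x y z : ℝ} (hx : 0 ≤ x) (hz : 0 < z) (h : z ≤ y) : x / y ≤ x / z := by
  rw [div_le_div_iff₀ (hz.trans_le h) hz]
  exact mul_le_mul_of_nonneg_left h hx

lemma aux_div_lt_div_left {x y z : ℝ} (hx : 0 < x) (hz : 0 < z) (h : z < y) : x / y < x / z := by
  rw [div_lt_div_iff₀ (hz.trans h) hz]
  exact mul_lt_mul_of_pos_left h hx

lemma aux_div_le_div {x y z w : ℝ} (hz : 0 ≤ z) (hxz : x ≤ z) (hw : 0 < w) (hwy : w ≤ y) :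
    x / y ≤ z / w := by
  rw [div_le_div_iff₀ (hw.trans_le hwy) hw]
  exact mul_le_mul hxz hwy hw.le hz

lemma aux_integral_lt {Ω : Type*} [MeasureSpace Ω] [IsProbabilityMeasure (ℙ : Measure Ω)]
    {f g : Ω → ℝ} (hf : Integrable f ℙ) (hg : Integrable g ℙ)
    (hle : ∀ᵐ ω ∂ℙ, f ω ≤ g ω) {s : Set Ω} (hs : 0 < ℙ s)
    (hlt : ∀ᵐ ω ∂ℙ, ω ∈ s → f ω < g ω) :
    ∫ ω, f ω ∂ℙ < ∫ ω, g ω ∂ℙ := by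
  rcases lt_or_eq_of_le (integral_mono_ae hf hg hle) with h | h
  · exact h
  exfalso
  have hsub : Integrable (fun ω => g ω - f ω) ℙ := hg.sub hf
  have h0 : ∫ ω, (g ω - f ω) ∂ℙ = 0 := by
    rw [integral_sub hg hf]; linarith
  have heq : (fun ω => g ω - f ω) =ᵐ[ℙ] 0 := by
    refine (integral_eq_zero_iff_of_nonneg_ae ?_ hsub).mp h0
    filter_upwards [hle] with ω h; simpa using h
  have hnot : ∀ᵐ ω ∂ℙ, ω ∉ s := by
    filter_upwards [heq, hlt] with ω h1 h2 hω
    have := h2 hω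
    simp only [Pi.zero_apply] at h1
    linarith
  rw [ae_iff] at hnot
  simp only [not_not] at hnot
  exact hs.ne' (by simpa using hnot)

lemma aux_integrable_sq_gaussian : Integrable (fun x : ℝ => x ^ 2) (gaussianReal 0 1) := by
  rw [gaussianReal_of_var_ne_zero 0 one_ne_zero,
    integrable_withDensity_iff (measurable_gaussianPDF 0 1)
      (Eventually.of_forall fun x => ENNReal.ofReal_lt_top)]
  have h1 : Integrable (fun x : ℝ => x ^ (2:ℝ) * Real.exp (-(1/2) * x ^ 2)) :=
    integrable_rpow_mul_exp_neg_mul_sq (by norm_num) (by norm_num)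
  have h2 : Integrable
      (fun x : ℝ => (Real.sqrt (2 * π))⁻¹ * (x ^ 2 * Real.exp (-(1/2) * x ^ 2))) := by
    refine Integrable.const_mul ?_ _
    simpa [Real.rpow_natCast] using h1
  refine h2.congr (Eventually.of_forall fun x => ?_)
  rw [gaussianPDF_def]
  simp only [ENNReal.toReal_ofReal (gaussianPDFReal_nonneg _ _ _)]
  unfold gaussianPDFReal
  push_cast
  rw [mul_one, mul_one, sub_zero]
  ring_nf

lemma aux_integrable_Gsq {Ω : Type*} [MeasureSpace Ω] [IsProbabilityMeasure (ℙ : Measure Ω)]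
    {G : Ω → ℝ} (hGmeas : Measurable G) (hG : Measure.map G ℙ = gaussianReal 0 1) :
    Integrable (fun ω => G ω ^ 2) ℙ := by
  have h : Integrable (fun x : ℝ => x ^ 2) (Measure.map G ℙ) := hG ▸ aux_integrable_sq_gaussian
  rw [integrable_map_measure (Measurable.aestronglyMeasurable (by fun_prop))
    hGmeas.aemeasurable] at h
  simpa [Function.comp_def] using h

lemma aux_integrable_bdd {Ω : Type*} [MeasureSpace Ω] [IsProbabilityMeasure (ℙ : Measure Ω)]
    {f : Ω → ℝ} (hf : Measurable f) {M : ℝ} (hM : ∀ᵐ ω ∂ℙ, |f ω| ≤ M) :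
    Integrable f ℙ := by
  refine Integrable.mono' (integrable_const M) hf.aestronglyMeasurable ?_
  filter_upwards [hM] with ω h using h

set_option maxHeartbeats 1000000

/-- Equivalent characterizations of the spectral threshold: with `0 < δᵢ < δ`, the
stationary points `λ̄(δ), λ̄(δᵢ)`, `ζ(λ;δᵢ) = ψ(max{λ, λ̄(δᵢ)};δᵢ)`, and `λ*` the unique
solution of `ζ(λ;δᵢ) = φ(λ)` on `(τ,∞)`, the following are equivalent:
(1) `λ* > λ̄(δ)`; (2) `ψ(λ̄(δ);δᵢ) < φ(λ̄(δ))`; (3) `ζ(λ*;δᵢ) > ζ(λ̄(δ);δᵢ)`;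
(4) `1/δ > 𝔼[(Z/(λ*−Z))²]`. -/
theorem spectral_threshold_equiv
    {Ω : Type*} [MeasureSpace Ω] [IsProbabilityMeasure (ℙ : Measure Ω)]
    (G Z : Ω → ℝ) (hGmeas : Measurable G) (hZmeas : Measurable Z)
    (hG : Measure.map G ℙ = gaussianReal 0 1)
    (hZbdd : ∃ C : ℝ, ∀ᵐ ω ∂ℙ, |Z ω| ≤ C)
    (τ : ℝ) (hτ : τ = essSup Z ℙ) (hτpos : 0 < τ)
    (hZ0 : ℙ {ω | Z ω = 0} < 1)
    (hZG : 0 < ℙ {ω | Z ω * G ω ≠ 0})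
    (φ : ℝ → ℝ) (ψ : ℝ → ℝ → ℝ)
    (hφ : ∀ lam : ℝ, φ lam = lam * ∫ ω, Z ω * (G ω) ^ 2 / (lam - Z ω) ∂ℙ)
    (hψ : ∀ (lam Δ : ℝ), ψ lam Δ = lam * (1 / Δ + ∫ ω, Z ω / (lam - Z ω) ∂ℙ))
    (δ δᵢ : ℝ) (hδᵢ : 0 < δᵢ) (hδ : δᵢ < δ)
    (lamBarδ lamBarδᵢ : ℝ)
    (hlamBarδ : lamBarδ ∈ Set.Ioi τ) (hlamBarδᵢ : lamBarδᵢ ∈ Set.Ioi τ)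
    (hstatδ : ∫ ω, (Z ω / (lamBarδ - Z ω)) ^ 2 ∂ℙ = 1 / δ)
    (hstatδᵢ : ∫ ω, (Z ω / (lamBarδᵢ - Z ω)) ^ 2 ∂ℙ = 1 / δᵢ)
    (ζ : ℝ → ℝ) (hζ : ∀ lam : ℝ, ζ lam = ψ (max lam lamBarδᵢ) δᵢ)
    (lamStar : ℝ) (hlamStar : lamStar ∈ Set.Ioi τ)
    (hsol : ζ lamStar = φ lamStar)
    (huniq : ∀ lam ∈ Set.Ioi τ, ζ lam = φ lam → lam = lamStar) :
    ((lamBarδ < lamStar) ↔ (ψ lamBarδ δᵢ < φ lamBarδ)) ∧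
    ((lamBarδ < lamStar) ↔ (ζ lamBarδ < ζ lamStar)) ∧
    ((lamBarδ < lamStar) ↔ (∫ ω, (Z ω / (lamStar - Z ω)) ^ 2 ∂ℙ) < 1 / δ) := by
  have hτL : τ < lamBarδ := hlamBarδ
  have hτLi : τ < lamBarδᵢ := hlamBarδᵢ
  have hτS : τ < lamStar := hlamStar
  obtain ⟨C₀, hC₀⟩ := hZbdd
  set C : ℝ := max C₀ 0 with hCdef
  have hC0 : (0:ℝ) ≤ C := le_max_right _ _
  have hC : ∀ᵐ ω ∂ℙ, |Z ω| ≤ C := by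
    filter_upwards [hC₀] with ω h using h.trans (le_max_left _ _)
  have hZτ : ∀ᵐ ω ∂ℙ, Z ω ≤ τ := by
    rw [hτ]
    refine ae_le_essSup ⟨C, ?_⟩
    rw [eventually_map]
    filter_upwards [hC] with ω h using (abs_le.mp h).2
  have hGsq : Integrable (fun ω => G ω ^ 2) ℙ := aux_integrable_Gsq hGmeas hG
  -- integrability facts
  have hZbd : ∀ lam : ℝ, τ < lam → ∀ᵐ ω ∂ℙ, |Z ω / (lam - Z ω)| ≤ C / (lam - τ) := by
    intro lam hlam
    filter_upwards [hC, hZτ] with ω h1 h2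
    have hpos : 0 < lam - τ := by linarith
    rw [abs_div, abs_of_pos (by linarith : (0:ℝ) < lam - Z ω)]
    exact aux_div_le_div hC0 h1 hpos (by linarith)
  have hQbd : ∀ a b : ℝ, τ < a → τ < b →
      ∀ᵐ ω ∂ℙ, |Z ω ^ 2 / ((a - Z ω) * (b - Z ω))| ≤ C ^ 2 / ((a - τ) * (b - τ)) := by
    intro a b ha hb
    filter_upwards [hC, hZτ] with ω h1 h2
    have h3 : 0 < a - τ := by linarith
    have h4 : 0 < b - τ := by linarith
    have h5 : 0 < a - Z ω := by linarith
    have h6 : 0 < b - Z ω := by linarith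
    rw [abs_div, abs_of_nonneg (sq_nonneg _), abs_of_pos (mul_pos h5 h6)]
    refine aux_div_le_div (by positivity) ?_ (mul_pos h3 h4) ?_
    · calc Z ω ^ 2 = |Z ω| ^ 2 := (sq_abs _).symm
        _ ≤ C ^ 2 := by nlinarith [abs_nonneg (Z ω)]
    · exact mul_le_mul (by linarith) (by linarith) h4.le h5.le
  have hintZ : ∀ lam : ℝ, τ < lam → Integrable (fun ω => Z ω / (lam - Z ω)) ℙ := by
    intro lam hlam
    exact aux_integrable_bdd (hZmeas.div (measurable_const.sub hZmeas)) (hZbd lam hlam)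
  have hintQ : ∀ a b : ℝ, τ < a → τ < b →
      Integrable (fun ω => Z ω ^ 2 / ((a - Z ω) * (b - Z ω))) ℙ := by
    intro a b ha hb
    exact aux_integrable_bdd (by fun_prop) (hQbd a b ha hb)
  have hintSq : ∀ lam : ℝ, τ < lam → Integrable (fun ω => (Z ω / (lam - Z ω)) ^ 2) ℙ := by
    intro lam hlam
    refine (hintQ lam lam hlam hlam).congr (Eventually.of_forall fun ω => ?_)
    show Z ω ^ 2 / ((lam - Z ω) * (lam - Z ω)) = (Z ω / (lam - Z ω)) ^ 2
    rw [div_pow, sq (lam - Z ω)]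
  have hintZG : ∀ lam : ℝ, τ < lam →
      Integrable (fun ω => Z ω * G ω ^ 2 / (lam - Z ω)) ℙ := by
    intro lam hlam
    refine Integrable.mono' (hGsq.const_mul (C / (lam - τ)))
      (Measurable.aestronglyMeasurable (by fun_prop)) ?_
    filter_upwards [hZbd lam hlam] with ω h1
    have : Z ω * G ω ^ 2 / (lam - Z ω) = (Z ω / (lam - Z ω)) * G ω ^ 2 := by ring
    rw [Real.norm_eq_abs, this, abs_mul, abs_of_nonneg (sq_nonneg (G ω))]
    exact mul_le_mul_of_nonneg_right h1 (sq_nonneg _)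
  have hintQG : ∀ a b : ℝ, τ < a → τ < b →
      Integrable (fun ω => Z ω ^ 2 * G ω ^ 2 / ((a - Z ω) * (b - Z ω))) ℙ := by
    intro a b ha hb
    refine Integrable.mono' (hGsq.const_mul (C ^ 2 / ((a - τ) * (b - τ))))
      (Measurable.aestronglyMeasurable (by fun_prop)) ?_
    filter_upwards [hQbd a b ha hb] with ω h1
    have : Z ω ^ 2 * G ω ^ 2 / ((a - Z ω) * (b - Z ω))
        = (Z ω ^ 2 / ((a - Z ω) * (b - Z ω))) * G ω ^ 2 := by ring
    rw [Real.norm_eq_abs, this, abs_mul, abs_of_nonneg (sq_nonneg (G ω))]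
    exact mul_le_mul_of_nonneg_right h1 (sq_nonneg _)
  -- positivity of P(Z ≠ 0)
  have hsZ : 0 < ℙ {ω | Z ω ≠ 0} := by
    have hms : MeasurableSet {ω | Z ω = 0} := hZmeas (measurableSet_singleton 0)
    have h2 : {ω | Z ω ≠ 0} = {ω | Z ω = 0}ᶜ := rfl
    rw [h2, prob_compl_eq_one_sub hms]
    exact tsub_pos_of_lt hZ0
  -- strict monotonicity of m
  have hm_strict : ∀ a b : ℝ, τ < a → a < b →
      ∫ ω, (Z ω / (b - Z ω)) ^ 2 ∂ℙ < ∫ ω, (Z ω / (a - Z ω)) ^ 2 ∂ℙ := by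
    intro a b ha hab
    refine aux_integral_lt (hintSq b (ha.trans hab)) (hintSq a ha) ?_ hsZ ?_
    · filter_upwards [hZτ] with ω h2
      have h3 : 0 < a - Z ω := by linarith
      rw [div_pow, div_pow]
      exact aux_div_le_div_left (sq_nonneg _) (by positivity) (by nlinarith)
    · filter_upwards [hZτ] with ω h2 hω
      have hz : Z ω ≠ 0 := hω
      have h3 : 0 < a - Z ω := by linarith
      have hz2 : 0 < Z ω ^ 2 := by rcases hz.lt_or_gt with h | h <;> nlinarith
      rw [div_pow, div_pow]
      exact aux_div_lt_div_left hz2 (by positivity) (by nlinarith)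
  -- λ̄(δᵢ) < λ̄(δ)
  have hLi_lt_L : lamBarδᵢ < lamBarδ := by
    by_contra h
    push_neg at h
    have hlt : 1 / δ < 1 / δᵢ := one_div_lt_one_div_of_lt hδᵢ hδ
    rcases h.eq_or_lt with h | h
    · rw [← hstatδ, ← hstatδᵢ, h] at hlt
      exact lt_irrefl _ hlt
    · have := hm_strict lamBarδ lamBarδᵢ hτL h
      rw [hstatδ, hstatδᵢ] at this
      linarith
  -- difference identity for ψ
  have hψdiff : ∀ a b : ℝ, τ < a → τ < b →
      ψ b δᵢ - ψ a δᵢ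
        = (b - a) * (1 / δᵢ - ∫ ω, Z ω ^ 2 / ((a - Z ω) * (b - Z ω)) ∂ℙ) := by
    intro a b ha hb
    have h1 : ∫ ω, (b * (Z ω / (b - Z ω)) - a * (Z ω / (a - Z ω))) ∂ℙ
        = ∫ ω, (-(b - a)) * (Z ω ^ 2 / ((a - Z ω) * (b - Z ω))) ∂ℙ := by
      refine integral_congr_ae ?_
      filter_upwards [hZτ] with ω h2
      have h3 : a - Z ω ≠ 0 := ne_of_gt (sub_pos.mpr (h2.trans_lt ha))
      have h4 : b - Z ω ≠ 0 := ne_of_gt (sub_pos.mpr (h2.trans_lt hb))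
      field_simp
      ring
    rw [integral_sub ((hintZ b hb).const_mul b) ((hintZ a ha).const_mul a),
      integral_const_mul, integral_const_mul, integral_const_mul] at h1
    rw [hψ, hψ]
    linear_combination h1
  -- difference identity for φ
  have hφdiff : ∀ a b : ℝ, τ < a → τ < b →
      φ b - φ a
        = -((b - a) * ∫ ω, Z ω ^ 2 * G ω ^ 2 / ((a - Z ω) * (b - Z ω)) ∂ℙ) := by
    intro a b ha hb
    have h1 : ∫ ω, (b * (Z ω * G ω ^ 2 / (b - Z ω)) - a * (Z ω * G ω ^ 2 / (a - Z ω))) ∂ℙ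
        = ∫ ω, (-(b - a)) * (Z ω ^ 2 * G ω ^ 2 / ((a - Z ω) * (b - Z ω))) ∂ℙ := by
      refine integral_congr_ae ?_
      filter_upwards [hZτ] with ω h2
      have h3 : a - Z ω ≠ 0 := ne_of_gt (sub_pos.mpr (h2.trans_lt ha))
      have h4 : b - Z ω ≠ 0 := ne_of_gt (sub_pos.mpr (h2.trans_lt hb))
      field_simp
      ring
    rw [integral_sub ((hintZG b hb).const_mul b) ((hintZG a ha).const_mul a),
      integral_const_mul, integral_const_mul, integral_const_mul] at h1
    rw [hφ, hφ]
    linear_combination h1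
  -- positivity of the Gaussian-weighted integral
  have hQGpos : ∀ a b : ℝ, τ < a → τ < b →
      0 < ∫ ω, Z ω ^ 2 * G ω ^ 2 / ((a - Z ω) * (b - Z ω)) ∂ℙ := by
    intro a b ha hb
    have h := aux_integral_lt (f := fun _ => (0:ℝ))
      (g := fun ω => Z ω ^ 2 * G ω ^ 2 / ((a - Z ω) * (b - Z ω)))
      (integrable_const 0) (hintQG a b ha hb) ?_ hZG ?_
    · simpa using h
    · filter_upwards [hZτ] with ω h2
      have h5 : 0 < a - Z ω := by linarith
      have h6 : 0 < b - Z ω := by linarith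
      positivity
    · filter_upwards [hZτ] with ω h2 hω
      have hzg : Z ω * G ω ≠ 0 := hω
      have hz : Z ω ≠ 0 := left_ne_zero_of_mul hzg
      have hg : G ω ≠ 0 := right_ne_zero_of_mul hzg
      have h5 : 0 < a - Z ω := by linarith
      have h6 : 0 < b - Z ω := by linarith
      have hz2 : 0 < Z ω ^ 2 := by rcases hz.lt_or_gt with h | h <;> nlinarith
      have hg2 : 0 < G ω ^ 2 := by rcases hg.lt_or_gt with h | h <;> nlinarith
      positivity
  -- φ is strictly decreasing
  have hφ_strict : ∀ a b : ℝ, τ < a → a < b → φ b < φ a := by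
    intro a b ha hab
    have hd := hφdiff a b ha (ha.trans hab)
    have hq := hQGpos a b ha (ha.trans hab)
    nlinarith
  -- key inequality for the ψ-increment
  have hI_lt : ∀ a b : ℝ, lamBarδᵢ ≤ a → a < b →
      ∫ ω, Z ω ^ 2 / ((a - Z ω) * (b - Z ω)) ∂ℙ < 1 / δᵢ := by
    intro a b ha hab
    have hτa : τ < a := lt_of_lt_of_le hτLi ha
    rw [← hstatδᵢ]
    refine aux_integral_lt (hintQ a b hτa (hτa.trans hab)) (hintSq lamBarδᵢ hτLi) ?_ hsZ ?_
    · filter_upwards [hZτ] with ω h2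
      have h5 : 0 < lamBarδᵢ - Z ω := by linarith
      rw [div_pow]
      exact aux_div_le_div_left (sq_nonneg _) (by positivity) (by nlinarith)
    · filter_upwards [hZτ] with ω h2 hω
      have hz : Z ω ≠ 0 := hω
      have h5 : 0 < lamBarδᵢ - Z ω := by linarith
      have hz2 : 0 < Z ω ^ 2 := by rcases hz.lt_or_gt with h | h <;> nlinarith
      rw [div_pow]
      exact aux_div_lt_div_left hz2 (by positivity) (by nlinarith)
  -- ψ strictly increasing on [λ̄(δᵢ), ∞)
  have hψ_strict : ∀ a b : ℝ, lamBarδᵢ ≤ a → a < b → ψ a δᵢ < ψ b δᵢ := by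
    intro a b ha hab
    have hτa : τ < a := lt_of_lt_of_le hτLi ha
    have hd := hψdiff a b hτa (hτa.trans hab)
    have hq := hI_lt a b ha hab
    nlinarith
  -- ζ is monotone
  have hζ_mono : ∀ a b : ℝ, a ≤ b → ζ a ≤ ζ b := by
    intro a b hab
    rw [hζ, hζ]
    have h1 : max a lamBarδᵢ ≤ max b lamBarδᵢ := max_le_max hab le_rfl
    rcases h1.eq_or_lt with h | h
    · rw [h]
    · exact (hψ_strict _ _ (le_max_right _ _) h).le
  have hζL : ζ lamBarδ = ψ lamBarδ δᵢ := by
    rw [hζ, max_eq_left hLi_lt_L.le]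
  refine ⟨⟨fun h => ?_, fun h => ?_⟩, ⟨fun h => ?_, fun h => ?_⟩, ⟨fun h => ?_, fun h => ?_⟩⟩
  · -- (1) → (2)
    have h1 : ζ lamBarδ ≤ ζ lamStar := hζ_mono _ _ h.le
    have h2 : φ lamStar < φ lamBarδ := hφ_strict _ _ hτL h
    rw [hζL] at h1
    linarith [hsol]
  · -- (2) → (1)
    rcases lt_trichotomy lamBarδ lamStar with h' | h' | h'
    · exact h'
    · exfalso
      have hx : ζ lamBarδ = φ lamBarδ := by rw [h']; exact hsol
      rw [hζL] at hx
      linarith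
    · exfalso
      have h1 : ζ lamStar ≤ ζ lamBarδ := hζ_mono _ _ h'.le
      have h2 : φ lamBarδ < φ lamStar := hφ_strict _ _ hτS h'
      rw [hζL] at h1
      linarith [hsol]
  · -- (1) → (3)
    rw [hζL, hζ lamStar, max_eq_left (hLi_lt_L.trans h).le]
    exact hψ_strict _ _ hLi_lt_L.le h
  · -- (3) → (1)
    by_contra h'
    push_neg at h'
    exact absurd h (not_lt.mpr (hζ_mono _ _ h'))
  · -- (1) → (4)
    rw [← hstatδ]
    exact hm_strict _ _ hτL h
  · -- (4) → (1)
    rcases lt_trichotomy lamBarδ lamStar with h' | h' | h'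
    · exact h'
    · exfalso
      rw [← h', hstatδ] at h
      exact lt_irrefl _ h
    · exfalso
      have := hm_strict lamStar lamBarδ hτS h'
      rw [hstatδ] at this
      linarith
end

section
/- The universal bound ∫_S (m₂(y) − m₀(y))²/m₀(y) dy ≤ 2 holds, regardless of the choice of the kernel p. -/
open MeasureTheory Real Set Filter Topology

lemma exp_quarter_bound (x : ℝ) : x ^ 4 + 1 ≤ 65 * Real.exp (x ^ 2 / 4) := by
  have h1 : x ^ 2 / 8 + 1 ≤ Real.exp (x ^ 2 / 8) := Real.add_one_le_exp _
  have h2 : Real.exp (x ^ 2 / 4) = Real.exp (x ^ 2 / 8) * Real.exp (x ^ 2 / 8) := by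
    rw [← Real.exp_add]; ring_nf
  nlinarith [sq_nonneg x, sq_nonneg (x^2), Real.exp_pos (x ^ 2 / 8)]

lemma int_master : Integrable (fun x : ℝ => (x ^ 4 + 1) * Real.exp (-(x ^ 2) / 2)) := by
  have hmaj : Integrable (fun x : ℝ => 65 * Real.exp (-(1/4 : ℝ) * x ^ 2)) :=
    (integrable_exp_neg_mul_sq (by norm_num)).const_mul 65
  refine hmaj.mono' ?_ ?_
  · have : Continuous (fun x : ℝ => (x ^ 4 + 1) * Real.exp (-(x ^ 2) / 2)) := by continuity
    exact this.aestronglyMeasurable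
  · refine Filter.Eventually.of_forall fun x => ?_
    have hb := exp_quarter_bound x
    have hsplit : Real.exp (-(x ^ 2) / 2) = (Real.exp (x ^ 2 / 4))⁻¹ * Real.exp (-(1/4 : ℝ) * x ^ 2) := by
      rw [← Real.exp_neg, ← Real.exp_add]; ring_nf
    have h4 : (0:ℝ) ≤ x ^ 4 + 1 := by positivity
    rw [Real.norm_eq_abs, abs_of_nonneg (by positivity)]
    rw [hsplit, ← mul_assoc]
    have : (x ^ 4 + 1) * (Real.exp (x ^ 2 / 4))⁻¹ ≤ 65 := by
      rw [← div_eq_mul_inv, div_le_iff₀ (by positivity)]; linarith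
    exact mul_le_mul_of_nonneg_right this (Real.exp_pos _).le


lemma int_gauss : Integrable (fun x : ℝ => Real.exp (-(x ^ 2) / 2)) := by
  have := integrable_exp_neg_mul_sq (b := 1/2) (by norm_num)
  refine this.congr (Filter.Eventually.of_forall fun x => ?_)
  ring_nf

lemma gauss_exp : ∫ x : ℝ, Real.exp (-(x ^ 2) / 2) = Real.sqrt (2 * Real.pi) := by
  have h := integral_gaussian (1/2 : ℝ)
  have h2 : (fun x : ℝ => Real.exp (-(1/2 : ℝ) * x ^ 2)) = fun x : ℝ => Real.exp (-(x ^ 2) / 2) := by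
    funext x; ring_nf
  rw [h2] at h
  rw [h]
  rw [show Real.pi / (1/2) = 2 * Real.pi by ring]

lemma decay_bound (x : ℝ) : ‖-(x ^ 3 + x) * Real.exp (-(x ^ 2) / 2)‖ ≤ 130 * Real.exp (-(x ^ 2) / 4) := by
  have he : Real.exp (-(x ^ 2) / 2) = (Real.exp (x ^ 2 / 4))⁻¹ * Real.exp (-(x ^ 2) / 4) := by
    rw [← Real.exp_neg, ← Real.exp_add]; ring_nf
  have hb := exp_quarter_bound x
  have ha : |x| ^ 3 + |x| ≤ 2 * (x ^ 4 + 1) := by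
    have h0 : (0:ℝ) ≤ |x| := abs_nonneg x
    have h4 : |x| ^ 4 = x ^ 4 := by rw [← abs_pow]; exact abs_of_nonneg (by positivity)
    nlinarith [sq_nonneg (|x| ^ 2 - |x|), sq_nonneg (|x| - 1), sq_nonneg (|x| ^ 2 - 1), sq_nonneg (|x|+1)]
  rw [norm_mul, Real.norm_eq_abs, Real.norm_eq_abs, abs_neg, abs_of_nonneg (Real.exp_pos _).le]
  have habs : |x ^ 3 + x| ≤ |x| ^ 3 + |x| := by
    calc |x ^ 3 + x| ≤ |x ^ 3| + |x| := abs_add_le _ _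
      _ = |x| ^ 3 + |x| := by rw [abs_pow]
  have step1 : |x ^ 3 + x| * Real.exp (-(x ^ 2) / 2) ≤ 2 * (x ^ 4 + 1) * Real.exp (-(x ^ 2) / 2) :=
    mul_le_mul_of_nonneg_right (habs.trans ha) (Real.exp_pos _).le
  refine step1.trans ?_
  rw [he, ← mul_assoc]
  refine mul_le_mul_of_nonneg_right ?_ (Real.exp_pos _).le
  rw [mul_comm (2 : ℝ), mul_assoc, ← div_eq_mul_inv]
  calc (x ^ 4 + 1) * (2 / Real.exp (x ^ 2 / 4)) ≤ 65 * Real.exp (x ^ 2 / 4) * (2 / Real.exp (x ^ 2 / 4)) := by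
        refine mul_le_mul_of_nonneg_right hb (by positivity)
    _ = 130 := by field_simp; ring
  
lemma tendsto_decay_top : Tendsto (fun x : ℝ => 130 * Real.exp (-(x ^ 2) / 4)) atTop (𝓝 0) := by
  have hsq : Tendsto (fun x : ℝ => x ^ 2) atTop atTop := tendsto_pow_atTop two_ne_zero
  have hneg : Tendsto (fun x : ℝ => -(x ^ 2)) atTop atBot := tendsto_neg_atTop_atBot.comp hsq
  have h1 : Tendsto (fun x : ℝ => -(x ^ 2) / 4) atTop atBot :=
    hneg.atBot_div_const (by norm_num)
  have := (Real.tendsto_exp_atBot.comp h1).const_mul (130 : ℝ)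
  simpa using this

lemma tendsto_decay_bot : Tendsto (fun x : ℝ => 130 * Real.exp (-(x ^ 2) / 4)) atBot (𝓝 0) := by
  have hsq : Tendsto (fun x : ℝ => x ^ 2) atBot atTop := by
    have h2 : Tendsto (fun x : ℝ => x ^ 2) atTop atTop := tendsto_pow_atTop two_ne_zero
    have := h2.comp (tendsto_neg_atBot_atTop (G := ℝ))
    refine this.congr fun x => ?_
    simp [Function.comp]
  have hneg : Tendsto (fun x : ℝ => -(x ^ 2)) atBot atBot := tendsto_neg_atTop_atBot.comp hsq
  have h1 : Tendsto (fun x : ℝ => -(x ^ 2) / 4) atBot atBot :=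
    hneg.atBot_div_const (by norm_num)
  have := (Real.tendsto_exp_atBot.comp h1).const_mul (130 : ℝ)
  simpa using this

lemma ftc_zero : ∫ x : ℝ, (x ^ 4 - 2 * x ^ 2 - 1) * Real.exp (-(x ^ 2) / 2) = 0 := by
  have hderiv : ∀ x : ℝ, HasDerivAt (fun x : ℝ => -(x ^ 3 + x) * Real.exp (-(x ^ 2) / 2))
      ((x ^ 4 - 2 * x ^ 2 - 1) * Real.exp (-(x ^ 2) / 2)) x := by
    intro x
    have h1 : HasDerivAt (fun x : ℝ => -(x ^ 3 + x)) (-(3 * x ^ 2 + 1)) x := by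
      have := ((hasDerivAt_pow 3 x).add (hasDerivAt_id x)).neg
      convert this using 1 <;> rfl
    have h2 : HasDerivAt (fun x : ℝ => -(x ^ 2) / 2) (-x) x := by
      have := ((hasDerivAt_pow 2 x).neg).div_const 2
      convert this using 1 <;> try rfl
      push_cast; ring
    have h3 := h2.exp
    have := h1.mul h3
    convert this using 1 <;> try rfl
    ring
  have hint : Integrable (fun x : ℝ => (x ^ 4 - 2 * x ^ 2 - 1) * Real.exp (-(x ^ 2) / 2)) := by
    refine (int_master.const_mul 2).mono' ?_ ?_
    · exact (Continuous.mul (by continuity) (by continuity)).aestronglyMeasurable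
    · refine Filter.Eventually.of_forall fun x => ?_
      rw [Real.norm_eq_abs, abs_mul, abs_of_nonneg (Real.exp_pos _).le]
      have : |x ^ 4 - 2 * x ^ 2 - 1| ≤ 2 * (x ^ 4 + 1) := by
        rw [abs_le]; constructor <;> nlinarith [sq_nonneg (x ^ 2 - 1), sq_nonneg x, sq_nonneg (x^2)]
      calc |x ^ 4 - 2 * x ^ 2 - 1| * Real.exp (-(x ^ 2) / 2)
          ≤ 2 * (x ^ 4 + 1) * Real.exp (-(x ^ 2) / 2) :=
            mul_le_mul_of_nonneg_right this (Real.exp_pos _).le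
        _ = 2 * ((x ^ 4 + 1) * Real.exp (-(x ^ 2) / 2)) := by ring
  have htop : Tendsto (fun x : ℝ => -(x ^ 3 + x) * Real.exp (-(x ^ 2) / 2)) atTop (𝓝 0) :=
    squeeze_zero_norm decay_bound tendsto_decay_top
  have hbot : Tendsto (fun x : ℝ => -(x ^ 3 + x) * Real.exp (-(x ^ 2) / 2)) atBot (𝓝 0) :=
    squeeze_zero_norm decay_bound tendsto_decay_bot
  have := MeasureTheory.integral_of_hasDerivAt_of_tendsto hderiv hint hbot htop
  simpa using this

lemma gauss_moment : ∫ x : ℝ, (x ^ 2 - 1) ^ 2 * Real.exp (-(x ^ 2) / 2) = 2 * Real.sqrt (2 * Real.pi) := by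
  have key : (fun x : ℝ => (x ^ 2 - 1) ^ 2 * Real.exp (-(x ^ 2) / 2)) =
      fun x : ℝ => (x ^ 4 - 2 * x ^ 2 - 1) * Real.exp (-(x ^ 2) / 2) + 2 * Real.exp (-(x ^ 2) / 2) := by
    funext x; ring
  have hint : Integrable (fun x : ℝ => (x ^ 4 - 2 * x ^ 2 - 1) * Real.exp (-(x ^ 2) / 2)) := by
    refine (int_master.const_mul 2).mono' ?_ ?_
    · exact (Continuous.mul (by continuity) (by continuity)).aestronglyMeasurable
    · refine Filter.Eventually.of_forall fun x => ?_
      rw [Real.norm_eq_abs, abs_mul, abs_of_nonneg (Real.exp_pos _).le]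
      have : |x ^ 4 - 2 * x ^ 2 - 1| ≤ 2 * (x ^ 4 + 1) := by
        rw [abs_le]; constructor <;> nlinarith [sq_nonneg (x ^ 2 - 1)]
      calc |x ^ 4 - 2 * x ^ 2 - 1| * Real.exp (-(x ^ 2) / 2)
          ≤ 2 * (x ^ 4 + 1) * Real.exp (-(x ^ 2) / 2) :=
            mul_le_mul_of_nonneg_right this (Real.exp_pos _).le
        _ = 2 * ((x ^ 4 + 1) * Real.exp (-(x ^ 2) / 2)) := by ring
  rw [key, integral_add hint (int_gauss.const_mul 2), ftc_zero, integral_const_mul, gauss_exp]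
  ring


lemma int_sq : Integrable (fun x : ℝ => (x ^ 2 - 1) ^ 2 * Real.exp (-(x ^ 2) / 2)) := by
  refine int_master.mono' ?_ ?_
  · exact (Continuous.mul (by continuity) (by continuity)).aestronglyMeasurable
  · refine Filter.Eventually.of_forall fun x => ?_
    rw [Real.norm_eq_abs, abs_of_nonneg (by positivity)]
    refine mul_le_mul_of_nonneg_right (by nlinarith [sq_nonneg x]) (Real.exp_pos _).le

/-- Universal bound: `∫_S (m₂ − m₀)²/m₀ ≤ 2`, where `S = {m₀ > 0}`, for any Markov
kernel `p(·|g)` and the Gaussian mixture moments `m₀, m₂`. -/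
theorem universal_second_moment_bound
    (p : ℝ → ℝ → ℝ)
    (hp_meas : Measurable (Function.uncurry p))
    (hp_nonneg : ∀ g y, 0 ≤ p g y)
    (hp_norm : ∀ g, ∫ y, p g y = 1)
    (m₀ m₂ : ℝ → ℝ)
    (hm₀ : ∀ y, m₀ y = ∫ g, Real.exp (-(g ^ 2) / 2) / Real.sqrt (2 * Real.pi) * p g y)
    (hm₂ : ∀ y, m₂ y =
      ∫ g, g ^ 2 * (Real.exp (-(g ^ 2) / 2) / Real.sqrt (2 * Real.pi)) * p g y) :
    ∫⁻ y in {y : ℝ | 0 < m₀ y}, ENNReal.ofReal ((m₂ y - m₀ y) ^ 2 / m₀ y) ≤ 2 := by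
  have hπ : 0 < Real.sqrt (2 * Real.pi) := Real.sqrt_pos.mpr (by positivity)
  set γ : ℝ → ℝ := fun g => Real.exp (-(g ^ 2) / 2) / Real.sqrt (2 * Real.pi) with hγdef
  have hγ_nonneg : ∀ g, 0 ≤ γ g := fun g => by positivity
  have hγ_cont : Continuous γ := by
    apply Continuous.div_const
    exact Real.continuous_exp.comp (by continuity)
  have hpy_meas : ∀ y, Measurable fun g => p g y :=
    fun y => hp_meas.comp (measurable_id.prodMk measurable_const)
  have hpg_meas : ∀ g, Measurable (p g) := fun g => hp_meas.comp measurable_prodMk_left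
  have hpint : ∀ g, Integrable (p g) := by
    intro g; by_contra h
    have := hp_norm g
    rw [integral_undef h] at this
    norm_num at this
  -- the dominating kernel
  set F : ℝ × ℝ → ENNReal := fun z => ENNReal.ofReal ((z.2 ^ 2 - 1) ^ 2 * (γ z.2 * p z.2 z.1))
    with hFdef
  have hF_meas : Measurable F := by
    apply Measurable.ennreal_ofReal
    refine Measurable.mul ?_ ?_
    · exact ((continuous_pow 2).sub continuous_const |>.pow 2).measurable.comp measurable_snd
    · exact ((hγ_cont.measurable.comp measurable_snd)).mul (hp_meas.comp measurable_swap)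
  set H : ℝ → ENNReal := fun y => ∫⁻ g, F (y, g) with hHdef
  have hH_meas : Measurable H := hF_meas.lintegral_prod_right'
  -- pointwise Cauchy-Schwarz bound on S
  have hpt : ∀ y ∈ {y : ℝ | 0 < m₀ y}, ENNReal.ofReal ((m₂ y - m₀ y) ^ 2 / m₀ y) ≤ H y := by
    intro y hy
    simp only [mem_setOf_eq] at hy
    set f : ℝ → ℝ := fun g => γ g * p g y with hfdef
    have hf_meas : Measurable f := hγ_cont.measurable.mul (hpy_meas y)
    have hf_nonneg : ∀ g, 0 ≤ f g := fun g => mul_nonneg (hγ_nonneg g) (hp_nonneg g y)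
    have hm₀y : m₀ y = ∫ g, f g := hm₀ y
    have hint0 : Integrable f := by
      by_contra h
      rw [hm₀y, integral_undef h] at hy
      exact lt_irrefl 0 hy
    by_cases hH : H y = ⊤
    · rw [hH]; exact le_top
    -- H y finite: get integrability of (g²-1)² f
    have h2meas : Measurable fun g => (g ^ 2 - 1) ^ 2 * f g :=
      (((continuous_pow 2).sub continuous_const |>.pow 2).measurable).mul hf_meas
    have h2nonneg : ∀ g, 0 ≤ (g ^ 2 - 1) ^ 2 * f g :=
      fun g => mul_nonneg (sq_nonneg _) (hf_nonneg g)
    have h2int : Integrable fun g => (g ^ 2 - 1) ^ 2 * f g := by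
      refine ⟨h2meas.aestronglyMeasurable, ?_⟩
      rw [hasFiniteIntegral_iff_ofReal (Filter.Eventually.of_forall h2nonneg)]
      exact lt_top_iff_ne_top.mpr hH
    have h1int : Integrable fun g => (g ^ 2 - 1) * f g := by
      refine ((h2int.add hint0).div_const 2).mono' ?_ ?_
      · exact ((continuous_pow 2).sub continuous_const).measurable.mul hf_meas
          |>.aestronglyMeasurable
      · refine Filter.Eventually.of_forall fun g => ?_
        rw [Real.norm_eq_abs, abs_mul, abs_of_nonneg (hf_nonneg g)]
        have ha : |g ^ 2 - 1| ^ 2 = (g ^ 2 - 1) ^ 2 := sq_abs _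
        have h1 : 2 * |g ^ 2 - 1| ≤ (g ^ 2 - 1) ^ 2 + 1 := by
          nlinarith [sq_nonneg (|g ^ 2 - 1| - 1)]
        have := mul_le_mul_of_nonneg_right h1 (hf_nonneg g)
        simp only [Pi.add_apply]
        linarith [this]
    have h2'int : Integrable fun g => g ^ 2 * f g := by
      have he : (fun g => g ^ 2 * f g) = fun g => (g ^ 2 - 1) * f g + f g :=
        funext fun g => by ring
      rw [he]; exact h1int.add hint0
    have hm₂y : m₂ y = ∫ g, g ^ 2 * f g := by
      rw [hm₂ y]
      exact integral_congr_ae (Filter.Eventually.of_forall fun g => by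
        simp only [hfdef]; ring)
    have key : m₂ y - m₀ y = ∫ g, (g ^ 2 - 1) * f g := by
      rw [hm₂y, hm₀y, ← integral_sub h2'int hint0]
      exact integral_congr_ae (Filter.Eventually.of_forall fun g => by ring)
    set I : ℝ := ∫ g, f g with hIdef
    set A : ℝ := ∫ g, (g ^ 2 - 1) * f g with hAdef
    set B : ℝ := ∫ g, (g ^ 2 - 1) ^ 2 * f g with hBdef
    have hI : 0 < I := hm₀y ▸ hy
    have hquad : 0 ≤ B - 2 * (A / I) * A + (A / I) ^ 2 * I := by
      have h : 0 ≤ ∫ g, ((g ^ 2 - 1) - A / I) ^ 2 * f g :=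
        integral_nonneg fun g => mul_nonneg (sq_nonneg _) (hf_nonneg g)
      have hexp : (fun g => ((g ^ 2 - 1) - A / I) ^ 2 * f g) =
          fun g => ((g ^ 2 - 1) ^ 2 * f g - (2 * (A / I)) * ((g ^ 2 - 1) * f g))
            + (A / I) ^ 2 * f g := funext fun g => by ring
      have ia : Integrable (fun g => (g ^ 2 - 1) ^ 2 * f g
          - 2 * (A / I) * ((g ^ 2 - 1) * f g)) := h2int.sub (h1int.const_mul _)
      have ib : Integrable (fun g => (A / I) ^ 2 * f g) := hint0.const_mul _
      have ic : Integrable (fun g => 2 * (A / I) * ((g ^ 2 - 1) * f g)) := h1int.const_mul _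
      rw [hexp, integral_add ia ib, integral_sub h2int ic,
        integral_const_mul, integral_const_mul] at h
      linarith [h]
    have hAB : A ^ 2 / I ≤ B := by
      have e : 2 * (A / I) * A - (A / I) ^ 2 * I = A ^ 2 / I := by
        field_simp
        ring
      have : A ^ 2 / I ≤ B := by linarith [hquad, e]
      exact this
    have hfinal : (m₂ y - m₀ y) ^ 2 / m₀ y = A ^ 2 / I := by rw [key, hm₀y]
    rw [hfinal]
    calc ENNReal.ofReal (A ^ 2 / I) ≤ ENNReal.ofReal B := ENNReal.ofReal_le_ofReal hAB
      _ = H y := by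
        rw [hBdef, ofReal_integral_eq_lintegral_ofReal h2int
          (Filter.Eventually.of_forall h2nonneg)]
  -- integrate the bound
  calc ∫⁻ y in {y : ℝ | 0 < m₀ y}, ENNReal.ofReal ((m₂ y - m₀ y) ^ 2 / m₀ y)
      ≤ ∫⁻ y in {y : ℝ | 0 < m₀ y}, H y := setLIntegral_mono hH_meas hpt
    _ ≤ ∫⁻ y, H y := setLIntegral_le_lintegral _ _
    _ = ∫⁻ g, ∫⁻ y, F (y, g) := lintegral_lintegral_swap hF_meas.aemeasurable
    _ = ∫⁻ g, ENNReal.ofReal ((g ^ 2 - 1) ^ 2 * γ g) := by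
        refine lintegral_congr fun g => ?_
        have he : ∀ y, F (y, g) =
            ENNReal.ofReal ((g ^ 2 - 1) ^ 2 * γ g) * ENNReal.ofReal (p g y) := by
          intro y
          rw [hFdef]
          simp only
          rw [← ENNReal.ofReal_mul (by positivity)]
          congr 1; ring
        simp_rw [he]
        rw [lintegral_const_mul _ ((hpg_meas g).ennreal_ofReal)]
        rw [← ofReal_integral_eq_lintegral_ofReal (hpint g)
          (Filter.Eventually.of_forall fun y => hp_nonneg g y), hp_norm g]
        simp
    _ = 2 := by
        have heq : (fun g : ℝ => (g ^ 2 - 1) ^ 2 * γ g) =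
            fun g => ((g ^ 2 - 1) ^ 2 * Real.exp (-(g ^ 2) / 2)) / Real.sqrt (2 * Real.pi) :=
          funext fun g => by simp only [hγdef]; ring
        have hci : Integrable (fun g : ℝ => (g ^ 2 - 1) ^ 2 * γ g) := by
          rw [heq]; exact int_sq.div_const _
        rw [← ofReal_integral_eq_lintegral_ofReal hci
          (Filter.Eventually.of_forall fun g => mul_nonneg (sq_nonneg _) (hγ_nonneg g))]
        have hval : ∫ g, (g ^ 2 - 1) ^ 2 * γ g = 2 := by
          rw [heq, integral_div, gauss_moment, mul_div_assoc, div_self hπ.ne', mul_one]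
        rw [hval]
        norm_num
end

section
/- Let α ∈ (1/2, 1) and suppose K := ∫_S (m₂ − m₀)²/m₀ dy ∈ (0, ∞). Then f_α(β) := (β − (1−α))·∫_S (m₂ − m₀)²/(α·m₂ + β·m₀) dy is finite for every β ∈ (1−α, ∞), strictly increasing on (1−α, ∞), tends to 0 as β ↓ 1−α and to K as β → ∞. Consequently, for every δ > 1/(α²K) there exists a unique β* ∈ (1−α, ∞) with f_α(β*) = 1/(α²δ). -/
open MeasureTheory Real Set Filter

/-- Properties of `f_α(β) = (β − (1−α))·∫_S (m₂−m₀)²/(α m₂ + β m₀)`: finiteness on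
`(1−α, ∞)`, strict monotonicity, boundary limits `0` and `K`, and existence of a
unique fixed point `β*` with `f_α(β*) = 1/(α²δ)` for every `δ > 1/(α²K)`. -/
theorem f_alpha_properties
    (p : ℝ → ℝ → ℝ)
    (hp_meas : Measurable (Function.uncurry p))
    (hp_nonneg : ∀ g y, 0 ≤ p g y)
    (hp_norm : ∀ g, ∫ y, p g y = 1)
    (m₀ m₂ : ℝ → ℝ)
    (hm₀ : ∀ y, m₀ y = ∫ g, Real.exp (-(g ^ 2) / 2) / Real.sqrt (2 * Real.pi) * p g y)
    (hm₂ : ∀ y, m₂ y =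
      ∫ g, g ^ 2 * (Real.exp (-(g ^ 2) / 2) / Real.sqrt (2 * Real.pi)) * p g y)
    (α : ℝ) (hα : 1 / 2 < α) (hα1 : α < 1)
    (K : ℝ)
    (hK_int : IntegrableOn (fun y => (m₂ y - m₀ y) ^ 2 / m₀ y) {y : ℝ | 0 < m₀ y})
    (hK : K = ∫ y in {y : ℝ | 0 < m₀ y}, (m₂ y - m₀ y) ^ 2 / m₀ y)
    (hKpos : 0 < K)
    (f : ℝ → ℝ)
    (hf : ∀ β : ℝ, f β = (β - (1 - α)) *
      ∫ y in {y : ℝ | 0 < m₀ y}, (m₂ y - m₀ y) ^ 2 / (α * m₂ y + β * m₀ y)) :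
    (∀ β ∈ Set.Ioi (1 - α), IntegrableOn
        (fun y => (m₂ y - m₀ y) ^ 2 / (α * m₂ y + β * m₀ y)) {y : ℝ | 0 < m₀ y}) ∧
    StrictMonoOn f (Set.Ioi (1 - α)) ∧
    Tendsto f (nhdsWithin (1 - α) (Set.Ioi (1 - α))) (nhds 0) ∧
    Tendsto f atTop (nhds K) ∧
    (∀ δ : ℝ, 1 / (α ^ 2 * K) < δ →
      ∃! β : ℝ, β ∈ Set.Ioi (1 - α) ∧ f β = 1 / (α ^ 2 * δ)) := by
  set c : ℝ := 1 - α with hc_def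
  set S : Set ℝ := {y : ℝ | 0 < m₀ y} with hS_def
  have hαpos : 0 < α := by linarith
  have hc_pos : 0 < c := by simp [hc_def]; linarith
  -- measurability of m₀, m₂
  have hm₀meas : Measurable m₀ := by
    have h : StronglyMeasurable (fun q : ℝ × ℝ =>
        Real.exp (-(q.2 ^ 2) / 2) / Real.sqrt (2 * Real.pi) * p q.2 q.1) :=
      Measurable.stronglyMeasurable
        ((((measurable_snd.pow_const 2).neg.div_const 2).exp.div_const _).mul
          (hp_meas.comp measurable_swap))
    have h2 : Measurable fun y : ℝ =>
        ∫ g, Real.exp (-(g ^ 2) / 2) / Real.sqrt (2 * Real.pi) * p g y :=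
      h.integral_prod_right'.measurable
    have he : m₀ = fun y => ∫ g, Real.exp (-(g ^ 2) / 2) / Real.sqrt (2 * Real.pi) * p g y :=
      funext hm₀
    rw [he]; exact h2
  have hm₂meas : Measurable m₂ := by
    have h : StronglyMeasurable (fun q : ℝ × ℝ =>
        q.2 ^ 2 * (Real.exp (-(q.2 ^ 2) / 2) / Real.sqrt (2 * Real.pi)) * p q.2 q.1) :=
      Measurable.stronglyMeasurable
        (((measurable_snd.pow_const 2).mul
          (((measurable_snd.pow_const 2).neg.div_const 2).exp.div_const _)).mul
          (hp_meas.comp measurable_swap))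
    have h2 : Measurable fun y : ℝ =>
        ∫ g, g ^ 2 * (Real.exp (-(g ^ 2) / 2) / Real.sqrt (2 * Real.pi)) * p g y :=
      h.integral_prod_right'.measurable
    have he : m₂ = fun y =>
        ∫ g, g ^ 2 * (Real.exp (-(g ^ 2) / 2) / Real.sqrt (2 * Real.pi)) * p g y :=
      funext hm₂
    rw [he]; exact h2
  have hSmeas : MeasurableSet S := measurableSet_lt measurable_const hm₀meas
  have hm₂nonneg : ∀ y, 0 ≤ m₂ y := by
    intro y
    rw [hm₂]
    refine integral_nonneg fun g => ?_
    exact mul_nonneg (by positivity) (hp_nonneg g y)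
  set h : ℝ → ℝ := fun y => (m₂ y - m₀ y) ^ 2 with hh_def
  have hden_pos : ∀ β, 0 < β → ∀ y ∈ S, 0 < α * m₂ y + β * m₀ y := by
    intro β hβ y hy
    have : 0 < m₀ y := hy
    nlinarith [hm₂nonneg y]
  have hF_nonneg : ∀ β, 0 < β → ∀ y ∈ S,
      0 ≤ h y / (α * m₂ y + β * m₀ y) := fun β hβ y hy =>
    div_nonneg (sq_nonneg _) (hden_pos β hβ y hy).le
  -- key bound
  have hbound : ∀ β β' : ℝ, 0 < β' → β' ≤ β → ∀ y ∈ S,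
      h y / (α * m₂ y + β * m₀ y) ≤ (h y / m₀ y) / β' := by
    intro β β' hβ' hββ' y hy
    have hb : (0:ℝ) < m₀ y := hy
    have h1 : 0 < β' * m₀ y := by positivity
    have h2 : β' * m₀ y ≤ α * m₂ y + β * m₀ y := by
      nlinarith [hm₂nonneg y]
    calc h y / (α * m₂ y + β * m₀ y) ≤ h y / (β' * m₀ y) :=
          div_le_div_of_nonneg_left (sq_nonneg _) h1 h2
      _ = (h y / m₀ y) / β' := by rw [div_div, mul_comm]
  -- nonnegativity of m₀
  have hm₀nonneg : ∀ y, 0 ≤ m₀ y := by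
    intro y
    rw [hm₀]
    refine integral_nonneg fun g => ?_
    exact mul_nonneg (by positivity) (hp_nonneg g y)
  -- integrability
  have hInt : ∀ β : ℝ, c < β → IntegrableOn
      (fun y => h y / (α * m₂ y + β * m₀ y)) S := by
    intro β hβ
    have hβpos : 0 < β := hc_pos.trans hβ
    refine Integrable.mono' (hK_int.div_const β) ?_ ?_
    · exact (((hm₂meas.sub hm₀meas).pow_const 2).div
        ((hm₂meas.const_mul α).add (hm₀meas.const_mul β))).aestronglyMeasurable
    · refine (ae_restrict_mem hSmeas).mono fun y hy => ?_
      rw [Real.norm_eq_abs, abs_of_nonneg (hF_nonneg β hβpos y hy)]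
      exact hbound β β hβpos le_rfl y hy
  -- positivity of the support of h/m₀
  have hsupp : 0 < (volume.restrict S) (Function.support fun y => h y / m₀ y) := by
    refine (integral_pos_iff_support_of_nonneg_ae ?_ hK_int).mp (hK ▸ hKpos)
    exact Eventually.of_forall fun y => div_nonneg (sq_nonneg _) (hm₀nonneg y)
  -- strict monotonicity
  have hmono : StrictMonoOn f (Set.Ioi c) := by
    intro β₁ hβ₁ β₂ hβ₂ h12
    have hb₁ : 0 < β₁ := hc_pos.trans hβ₁
    have hb₂ : 0 < β₂ := hc_pos.trans hβ₂
    set F₁ : ℝ → ℝ := fun y => (β₁ - c) * (h y / (α * m₂ y + β₁ * m₀ y)) with hF₁def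
    set F₂ : ℝ → ℝ := fun y => (β₂ - c) * (h y / (α * m₂ y + β₂ * m₀ y)) with hF₂def
    have hI₁ : IntegrableOn F₁ S := (hInt β₁ hβ₁).const_mul _
    have hI₂ : IntegrableOn F₂ S := (hInt β₂ hβ₂).const_mul _
    have hbr : ∀ y ∈ S, (β₁ - c) / (α * m₂ y + β₁ * m₀ y)
        < (β₂ - c) / (α * m₂ y + β₂ * m₀ y) := by
      intro y hy
      have d1 := hden_pos β₁ hb₁ y hy
      have d2 := hden_pos β₂ hb₂ y hy
      have hb : (0:ℝ) < m₀ y := hy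
      rw [div_lt_div_iff₀ d1 d2]
      nlinarith [mul_nonneg (sub_pos.mpr h12).le (mul_nonneg hαpos.le (hm₂nonneg y)),
        mul_pos (mul_pos (sub_pos.mpr h12) hc_pos) hb]
    have hdiff : ∀ y, F₂ y - F₁ y = h y *
        ((β₂ - c) / (α * m₂ y + β₂ * m₀ y) - (β₁ - c) / (α * m₂ y + β₁ * m₀ y)) := by
      intro y; simp only [hF₁def, hF₂def]; ring
    have hh_nonneg : ∀ y, 0 ≤ h y := by
      intro y; simp only [hh_def]; exact sq_nonneg _
    have hnn : 0 ≤ᵐ[volume.restrict S] (F₂ - F₁) := by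
      refine (ae_restrict_mem hSmeas).mono fun y hy => ?_
      rw [Pi.zero_apply, Pi.sub_apply, hdiff y]
      exact mul_nonneg (hh_nonneg y) (sub_nonneg.mpr (hbr y hy).le)
    have hsupp2 : 0 < (volume.restrict S) (Function.support (F₂ - F₁)) := by
      refine lt_of_lt_of_le hsupp ?_
      rw [Measure.restrict_apply' hSmeas, Measure.restrict_apply' hSmeas]
      refine measure_mono fun y hy => ?_
      obtain ⟨hy1, hy2⟩ := hy
      refine ⟨?_, hy2⟩
      have hhy : h y ≠ 0 := by
        intro hz
        exact Function.mem_support.mp hy1 (by rw [hz, zero_div])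
      have hhpos : 0 < h y := lt_of_le_of_ne (hh_nonneg y) (Ne.symm hhy)
      have hpos2 : 0 < F₂ y - F₁ y := by
        rw [hdiff y]; exact mul_pos hhpos (sub_pos.mpr (hbr y hy2))
      refine Function.mem_support.mpr ?_
      rw [Pi.sub_apply]
      exact hpos2.ne'
    have key : 0 < ∫ y in S, (F₂ y - F₁ y) := by
      have h0 := (integral_pos_iff_support_of_nonneg_ae hnn (hI₂.sub hI₁)).mpr hsupp2
      simpa [Pi.sub_apply] using h0
    have heq : f β₂ - f β₁ = ∫ y in S, (F₂ y - F₁ y) := by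
      rw [integral_sub hI₂ hI₁, hf, hf]
      simp only [hF₁def, hF₂def, hh_def, integral_const_mul]
    linarith
  -- nonnegativity and upper bound for f
  have hf_nonneg : ∀ β, c < β → 0 ≤ f β := by
    intro β hβ
    rw [hf]
    refine mul_nonneg (by linarith) (integral_nonneg_of_ae ?_)
    exact (ae_restrict_mem hSmeas).mono fun y hy => hF_nonneg β (hc_pos.trans hβ) y hy
  have hf_le : ∀ β, c < β → f β ≤ (β - c) * (K / β) := by
    intro β hβ
    have hβpos := hc_pos.trans hβ
    rw [hf]
    have h1 : ∫ y in S, h y / (α * m₂ y + β * m₀ y) ≤ ∫ y in S, (h y / m₀ y) / β := by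
      refine integral_mono_ae (hInt β hβ) (hK_int.div_const β) ?_
      exact (ae_restrict_mem hSmeas).mono fun y hy => hbound β β hβpos le_rfl y hy
    have h2 : ∫ y in S, (h y / m₀ y) / β = K / β := by
      rw [integral_div, ← hK]
    calc (β - c) * ∫ y in S, h y / (α * m₂ y + β * m₀ y)
        ≤ (β - c) * ∫ y in S, (h y / m₀ y) / β :=
          mul_le_mul_of_nonneg_left h1 (by linarith)
      _ = (β - c) * (K / β) := by rw [h2]
  -- limit at c from the right
  have hlim0 : Tendsto f (nhdsWithin c (Set.Ioi c)) (nhds 0) := by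
    have hcont : ContinuousAt (fun β => (β - c) * (K / β)) c :=
      (continuousAt_id.sub continuousAt_const).mul
        (continuousAt_const.div continuousAt_id hc_pos.ne')
    have hg : Tendsto (fun β => (β - c) * (K / β)) (nhdsWithin c (Set.Ioi c)) (nhds 0) := by
      have h2 : Tendsto (fun β => (β - c) * (K / β)) (nhdsWithin c (Set.Ioi c))
          (nhds ((c - c) * (K / c))) := hcont.continuousWithinAt (s := Set.Ioi c)
      simpa using h2
    refine tendsto_of_tendsto_of_tendsto_of_le_of_le' tendsto_const_nhds hg ?_ ?_
    · exact eventually_nhdsWithin_of_forall fun β hβ => hf_nonneg β hβ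
    · exact eventually_nhdsWithin_of_forall fun β hβ => hf_le β hβ
  -- limit at infinity
  have hfK : Tendsto f atTop (nhds K) := by
    have hfeq : ∀ β, f β = ∫ y in S, (β - c) * (h y / (α * m₂ y + β * m₀ y)) := by
      intro β; rw [hf, ← integral_const_mul]
    rw [hK]
    refine Tendsto.congr (fun β => (hfeq β).symm) ?_
    refine tendsto_integral_filter_of_dominated_convergence (fun y => h y / m₀ y) ?_ ?_ hK_int ?_
    · refine Eventually.of_forall fun β => ?_
      exact ((((hm₂meas.sub hm₀meas).pow_const 2).div
        ((hm₂meas.const_mul α).add (hm₀meas.const_mul β))).const_mul _).aestronglyMeasurable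
    · filter_upwards [eventually_gt_atTop c] with β hβ
      refine (ae_restrict_mem hSmeas).mono fun y hy => ?_
      have hβpos := hc_pos.trans hβ
      have hb : (0:ℝ) < m₀ y := hy
      have d := hden_pos β hβpos y hy
      rw [Real.norm_eq_abs,
        abs_of_nonneg (mul_nonneg (by linarith) (hF_nonneg β hβpos y hy)),
        mul_div_assoc', div_le_div_iff₀ d hb]
      have hhy : 0 ≤ h y := by simp only [hh_def]; exact sq_nonneg _
      nlinarith [mul_nonneg hhy
        (add_nonneg (mul_nonneg hαpos.le (hm₂nonneg y)) (mul_nonneg hc_pos.le hb.le))]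
    · refine (ae_restrict_mem hSmeas).mono fun y hy => ?_
      have hb : (0:ℝ) < m₀ y := hy
      have ha : 0 ≤ α * m₂ y := mul_nonneg hαpos.le (hm₂nonneg y)
      have h1 : Tendsto (fun β : ℝ => h y * ((1 - c / β) / (α * m₂ y / β + m₀ y))) atTop
          (nhds (h y * ((1 - 0) / (0 + m₀ y)))) := by
        refine tendsto_const_nhds.mul (Tendsto.div ?_ ?_ ?_)
        · exact tendsto_const_nhds.sub (tendsto_const_nhds.div_atTop tendsto_id)
        · exact (tendsto_const_nhds.div_atTop tendsto_id).add tendsto_const_nhds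
        · simpa using hb.ne'
      have h2 : (fun β : ℝ => h y * ((1 - c / β) / (α * m₂ y / β + m₀ y))) =ᶠ[atTop]
          (fun β => (β - c) * (h y / (α * m₂ y + β * m₀ y))) := by
        filter_upwards [eventually_gt_atTop 0] with β hβ
        have hd := (hden_pos β hβ y hy).ne'
        have hd2 : α * m₂ y / β + m₀ y ≠ 0 :=
          (add_pos_of_nonneg_of_pos (div_nonneg ha hβ.le) hb).ne'
        field_simp
      have h3 := Filter.Tendsto.congr' h2 h1
      convert h3 using 2
      simp [hh_def, div_eq_mul_inv]
  -- continuity of f on Ioi c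
  have hfc : ∀ β₀ ∈ Set.Ioi c, ContinuousAt f β₀ := by
    intro β₀ hβ₀
    have hβ₀pos : 0 < β₀ := hc_pos.trans hβ₀
    set β' : ℝ := (c + β₀) / 2 with hβ'def
    have hβ'pos : 0 < β' := by rw [hβ'def]; positivity
    have hβ'lt : β' < β₀ := by rw [hβ'def]; simp only [Set.mem_Ioi] at hβ₀; linarith
    have hIcont : ContinuousAt (fun β => ∫ y in S, h y / (α * m₂ y + β * m₀ y)) β₀ := by
      refine continuousAt_of_dominated ?_ ?_ (hK_int.div_const β') ?_
      · refine Eventually.of_forall fun β => ?_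
        exact (((hm₂meas.sub hm₀meas).pow_const 2).div
          ((hm₂meas.const_mul α).add (hm₀meas.const_mul β))).aestronglyMeasurable
      · filter_upwards [eventually_gt_nhds hβ'lt] with β hβ
        refine (ae_restrict_mem hSmeas).mono fun y hy => ?_
        rw [Real.norm_eq_abs, abs_of_nonneg (hF_nonneg β (hβ'pos.trans hβ) y hy)]
        exact hbound β β' hβ'pos hβ.le y hy
      · refine (ae_restrict_mem hSmeas).mono fun y hy => ?_
        exact ContinuousAt.div continuousAt_const
          ((continuous_const.add (continuous_id.mul continuous_const)).continuousAt)
          (hden_pos β₀ hβ₀pos y hy).ne'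
    have hcont : ContinuousAt
        (fun β => (β - c) * ∫ y in S, h y / (α * m₂ y + β * m₀ y)) β₀ :=
      (continuousAt_id.sub continuousAt_const).mul hIcont
    have hfe : f = fun β => (β - c) * ∫ y in S, h y / (α * m₂ y + β * m₀ y) := funext hf
    rw [hfe]
    exact hcont
  refine ⟨fun β hβ => hInt β hβ, hmono, hlim0, hfK, ?_⟩
  intro δ hδ
  have hδpos : 0 < δ := lt_trans (by positivity) hδ
  set t : ℝ := 1 / (α ^ 2 * δ) with ht_def
  have ht_pos : 0 < t := by rw [ht_def]; positivity
  have h1δ : 1 < δ * (α ^ 2 * K) := (div_lt_iff₀ (by positivity)).mp hδ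
  have ht_lt : t < K := by
    rw [ht_def, div_lt_iff₀ (by positivity)]
    nlinarith
  obtain ⟨β₁, hβ₁f, hβ₁mem⟩ :=
    ((hlim0.eventually (gt_mem_nhds ht_pos)).and eventually_mem_nhdsWithin).exists
  obtain ⟨β₂, hβ₂f, hβ₂gt⟩ :=
    ((hfK.eventually (lt_mem_nhds ht_lt)).and (eventually_gt_atTop β₁)).exists
  have hsub : Set.Icc β₁ β₂ ⊆ Set.Ioi c := fun x hx => lt_of_lt_of_le hβ₁mem hx.1
  have hcont : ContinuousOn f (Set.Icc β₁ β₂) :=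
    fun x hx => (hfc x (hsub hx)).continuousWithinAt
  have htmem : t ∈ Set.Icc (f β₁) (f β₂) := ⟨hβ₁f.le, hβ₂f.le⟩
  obtain ⟨b, hbmem, hbeq⟩ := intermediate_value_Icc hβ₂gt.le hcont htmem
  refine ⟨b, ⟨hsub hbmem, hbeq⟩, ?_⟩
  rintro b' ⟨hb'mem, hb'eq⟩
  exact hmono.injOn hb'mem (hsub hbmem) (hb'eq.trans hbeq.symm)
end

section
/- Let α ∈ (1/2, 1), δ > 0 and suppose K₁ := ∫_S m₁(y)²/m₀(y) dy ∈ (0, ∞). For every measurable L : ℝ → ℝ with ∫_S m₀·L² dy ∈ (0, ∞) and ∫_S |m₁·L| dy < ∞, one has α·(∫_S m₁·L dy) / √((α² + (1−α)²)·(∫_S m₁·L dy)² + (1/δ)·∫_S m₀·L² dy) ≤ ((α² + (1−α)²)/α² + 1/(α²·δ·K₁))^{−1/2}, and (1−α)·(∫_S m₁·L dy) / √((α² + (1−α)²)·(∫_S m₁·L dy)² + (1/δ)·∫_S m₀·L² dy) ≤ ((α² + (1−α)²)/(1−α)² + 1/((1−α)²·δ·K₁))^{−1/2}; both bounds are attained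 simultaneously by the choice L(y) = m₁(y)/m₀(y) on S. -/
open MeasureTheory Real Set

/-- Algebraic equality: the value achieved by the optimal choice. -/
lemma aux_eq (c δ K β : ℝ) (hc : 0 < c) (hδ : 0 < δ) (hK : 0 < K) (hβ : 0 < β) :
    β * K / Real.sqrt (c * K ^ 2 + K / δ) =
      (Real.sqrt (c / β ^ 2 + 1 / (β ^ 2 * δ * K)))⁻¹ := by
  have hD : 0 < c * K ^ 2 + K / δ := by positivity
  have hE : 0 < c / β ^ 2 + 1 / (β ^ 2 * δ * K) := by positivity
  have h1 : β * K = Real.sqrt ((β * K) ^ 2) := (Real.sqrt_sq (by positivity)).symm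
  rw [h1, ← Real.sqrt_div (by positivity), ← Real.sqrt_inv]
  congr 1
  field_simp

/-- Algebraic inequality using the Cauchy–Schwarz bound `A² ≤ K·B`. -/
lemma aux_ineq (c δ K B A β : ℝ) (hc : 0 < c) (hδ : 0 < δ) (hK : 0 < K)
    (hB : 0 < B) (hβ : 0 < β) (hCS : A ^ 2 ≤ K * B) :
    β * A / Real.sqrt (c * A ^ 2 + (1 / δ) * B) ≤
      (Real.sqrt (c / β ^ 2 + 1 / (β ^ 2 * δ * K)))⁻¹ := by
  have hE : 0 < c / β ^ 2 + 1 / (β ^ 2 * δ * K) := by positivity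
  rcases le_or_gt A 0 with hA | hA
  · have h1 : β * A / Real.sqrt (c * A ^ 2 + (1 / δ) * B) ≤ 0 :=
      div_nonpos_iff.2 (Or.inr ⟨mul_nonpos_of_nonneg_of_nonpos hβ.le hA, Real.sqrt_nonneg _⟩)
    have h2 : (0:ℝ) ≤ (Real.sqrt (c / β ^ 2 + 1 / (β ^ 2 * δ * K)))⁻¹ := by positivity
    linarith
  · have hD : 0 < c * A ^ 2 + (1 / δ) * B := by positivity
    rw [inv_eq_one_div, div_le_div_iff₀ (Real.sqrt_pos.2 hD) (Real.sqrt_pos.2 hE), one_mul]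
    have h1 : β * A * Real.sqrt (c / β ^ 2 + 1 / (β ^ 2 * δ * K)) =
        Real.sqrt ((β * A) ^ 2 * (c / β ^ 2 + 1 / (β ^ 2 * δ * K))) := by
      rw [Real.sqrt_mul (by positivity), Real.sqrt_sq (by positivity)]
    rw [h1]
    apply Real.sqrt_le_sqrt
    have expand : (β * A) ^ 2 * (c / β ^ 2 + 1 / (β ^ 2 * δ * K)) =
        c * A ^ 2 + A ^ 2 / (δ * K) := by
      field_simp
    rw [expand]
    have h2 : A ^ 2 / (δ * K) ≤ (1 / δ) * B := by
      rw [div_le_iff₀ (by positivity)]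
      have : (1 / δ) * B * (δ * K) = K * B := by field_simp
      rw [this]; nlinarith [hCS]
    linarith

/-- Optimal overlaps for the linear estimator: for any preprocessing `L`, the two
overlap functionals are bounded by the explicit optimal values, and both bounds are
attained simultaneously by `L = m₁/m₀`. -/
theorem optimal_linear_estimator
    (p : ℝ → ℝ → ℝ)
    (hp_meas : Measurable (Function.uncurry p))
    (hp_nonneg : ∀ g y, 0 ≤ p g y)
    (hp_norm : ∀ g, ∫ y, p g y = 1)
    (m₀ m₁ : ℝ → ℝ)
    (hm₀ : ∀ y, m₀ y = ∫ g, Real.exp (-(g ^ 2) / 2) / Real.sqrt (2 * Real.pi) * p g y)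
    (hm₁ : ∀ y, m₁ y =
      ∫ g, g * (Real.exp (-(g ^ 2) / 2) / Real.sqrt (2 * Real.pi)) * p g y)
    (α δ : ℝ) (hα : 1 / 2 < α) (hα1 : α < 1) (hδ : 0 < δ)
    (K₁ : ℝ)
    (hK₁_int : IntegrableOn (fun y => (m₁ y) ^ 2 / m₀ y) {y : ℝ | 0 < m₀ y})
    (hK₁ : K₁ = ∫ y in {y : ℝ | 0 < m₀ y}, (m₁ y) ^ 2 / m₀ y)
    (hK₁pos : 0 < K₁) :
    (∀ L : ℝ → ℝ, Measurable L →
      IntegrableOn (fun y => m₀ y * L y ^ 2) {y : ℝ | 0 < m₀ y} →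
      0 < ∫ y in {y : ℝ | 0 < m₀ y}, m₀ y * L y ^ 2 →
      IntegrableOn (fun y => m₁ y * L y) {y : ℝ | 0 < m₀ y} →
      (α * (∫ y in {y : ℝ | 0 < m₀ y}, m₁ y * L y) /
          Real.sqrt ((α ^ 2 + (1 - α) ^ 2) *
              (∫ y in {y : ℝ | 0 < m₀ y}, m₁ y * L y) ^ 2 +
            (1 / δ) * ∫ y in {y : ℝ | 0 < m₀ y}, m₀ y * L y ^ 2) ≤
        (Real.sqrt ((α ^ 2 + (1 - α) ^ 2) / α ^ 2 + 1 / (α ^ 2 * δ * K₁)))⁻¹) ∧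
      ((1 - α) * (∫ y in {y : ℝ | 0 < m₀ y}, m₁ y * L y) /
          Real.sqrt ((α ^ 2 + (1 - α) ^ 2) *
              (∫ y in {y : ℝ | 0 < m₀ y}, m₁ y * L y) ^ 2 +
            (1 / δ) * ∫ y in {y : ℝ | 0 < m₀ y}, m₀ y * L y ^ 2) ≤
        (Real.sqrt ((α ^ 2 + (1 - α) ^ 2) / (1 - α) ^ 2 +
            1 / ((1 - α) ^ 2 * δ * K₁)))⁻¹)) ∧
    (α * K₁ / Real.sqrt ((α ^ 2 + (1 - α) ^ 2) * K₁ ^ 2 + K₁ / δ) =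
        (Real.sqrt ((α ^ 2 + (1 - α) ^ 2) / α ^ 2 + 1 / (α ^ 2 * δ * K₁)))⁻¹) ∧
    ((1 - α) * K₁ / Real.sqrt ((α ^ 2 + (1 - α) ^ 2) * K₁ ^ 2 + K₁ / δ) =
        (Real.sqrt ((α ^ 2 + (1 - α) ^ 2) / (1 - α) ^ 2 +
            1 / ((1 - α) ^ 2 * δ * K₁)))⁻¹) := by
  have hα0 : 0 < α := by linarith
  have hα1' : 0 < 1 - α := by linarith
  have hc : 0 < α ^ 2 + (1 - α) ^ 2 := by positivity
  -- measurability of m₀ and hence of the set S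
  have hm₀meas : Measurable m₀ := by
    have h1 : Measurable (Function.uncurry fun g y =>
        Real.exp (-(g ^ 2) / 2) / Real.sqrt (2 * Real.pi) * p g y) := by
      apply Measurable.mul _ hp_meas
      exact ((measurable_fst.pow measurable_const).neg.div_const 2).exp.div_const _
    have h2 : StronglyMeasurable fun y =>
        ∫ g, Real.exp (-(g ^ 2) / 2) / Real.sqrt (2 * Real.pi) * p g y :=
      h1.stronglyMeasurable.integral_prod_left
    have : m₀ = fun y => ∫ g, Real.exp (-(g ^ 2) / 2) / Real.sqrt (2 * Real.pi) * p g y :=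
      funext hm₀
    rw [this]
    exact h2.measurable
  have hS : MeasurableSet {y : ℝ | 0 < m₀ y} := measurableSet_lt measurable_const hm₀meas
  set S : Set ℝ := {y : ℝ | 0 < m₀ y} with hSdef
  refine ⟨?_, aux_eq _ _ _ _ hc hδ hK₁pos hα0, aux_eq _ _ _ _ hc hδ hK₁pos hα1'⟩
  intro L hL hL2 hL2pos hL1
  set A : ℝ := ∫ y in S, m₁ y * L y with hA
  set B : ℝ := ∫ y in S, m₀ y * L y ^ 2 with hB
  -- Cauchy–Schwarz: A² ≤ K₁ * B
  have hCS : A ^ 2 ≤ K₁ * B := by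
    set t : ℝ := A / K₁ with ht
    have hpt : ∀ y ∈ S, m₀ y * (t * m₁ y / m₀ y - L y) ^ 2 =
        t ^ 2 * ((m₁ y) ^ 2 / m₀ y) - 2 * t * (m₁ y * L y) + m₀ y * L y ^ 2 := by
      intro y hy
      have hy' : m₀ y ≠ 0 := ne_of_gt hy
      field_simp
      ring
    have hnn : 0 ≤ ∫ y in S, m₀ y * (t * m₁ y / m₀ y - L y) ^ 2 := by
      apply setIntegral_nonneg hS
      intro y hy
      exact mul_nonneg (le_of_lt hy) (sq_nonneg _)
    have hval : (∫ y in S, m₀ y * (t * m₁ y / m₀ y - L y) ^ 2) =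
        t ^ 2 * K₁ - 2 * t * A + B := by
      rw [setIntegral_congr_fun hS hpt]
      have hsub : IntegrableOn
          (fun x => t ^ 2 * ((m₁ x) ^ 2 / m₀ x) - 2 * t * (m₁ x * L x)) S :=
        (hK₁_int.const_mul _).sub (hL1.const_mul _)
      rw [integral_add hsub hL2, integral_sub (hK₁_int.const_mul _) (hL1.const_mul _),
        integral_const_mul, integral_const_mul, ← hK₁]
    rw [hval] at hnn
    have ht2 : t ^ 2 * K₁ - 2 * t * A = -(A ^ 2 / K₁) := by
      rw [ht]; field_simp; ring
    rw [ht2] at hnn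
    have : A ^ 2 / K₁ ≤ B := by linarith
    calc A ^ 2 = K₁ * (A ^ 2 / K₁) := by field_simp
      _ ≤ K₁ * B := by apply mul_le_mul_of_nonneg_left this hK₁pos.le
  exact ⟨aux_ineq _ _ _ _ _ _ hc hδ hK₁pos hL2pos hα0 hCS,
    aux_ineq _ _ _ _ _ _ hc hδ hK₁pos hL2pos hα1' hCS⟩
end

section
/- As t → ∞, the state-evolution sequence (χ_t, σ²_{V,t}) converges to the fixed point (χ̃, σ̃²), where β̃² := δ·a², χ̃ := √(β̃²·(β̃² − c)/(β̃² + b − c)) and σ̃² := β̃²·b/(β̃² + b − c); in particular, β_t² → β̃² = δ·a² = χ̃² + σ̃². -/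
open MeasureTheory ProbabilityTheory Real Set Filter

set_option maxHeartbeats 1600000 in
/-- Convergence of the state-evolution recursion to its fixed point:
with `a = 𝔼[F(Ỹ)(G₁²−1)] > 0`, `b = 𝔼[F(Ỹ)²G₁²]`, `c = 𝔼[F(Ỹ)²]` and `δ > c/a²`,
the sequence `(χ_t, σ²_{V,t})` converges to `(χ̃, σ̃²)` with
`β̃² = δ a² = χ̃² + σ̃²`, `χ̃ = √(β̃²(β̃²−c)/(β̃²+b−c))`, `σ̃² = β̃² b/(β̃²+b−c)`. -/
theorem state_evolution_fixed_point
    {Ω : Type*} [MeasureSpace Ω] [IsProbabilityMeasure (ℙ : Measure Ω)]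
    (α δ : ℝ) (hα : 1 / 2 < α) (hα1 : α < 1) (hδ : 0 < δ)
    (Pε : Measure ℝ) [IsProbabilityMeasure Pε]
    (q : ℝ → ℝ → ℝ) (hq : Measurable (Function.uncurry q))
    (F : ℝ → ℝ) (hF_meas : Measurable F) (hF_bdd : ∃ M : ℝ, ∀ x, |F x| ≤ M)
    (G₁ G₂ η ε : Ω → ℝ)
    (hG₁m : Measurable G₁) (hG₂m : Measurable G₂)
    (hηm : Measurable η) (hεm : Measurable ε)
    (hG₁ : Measure.map G₁ ℙ = gaussianReal 0 1)
    (hG₂ : Measure.map G₂ ℙ = gaussianReal 0 1)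
    (hη : Measure.map η ℙ =
      ENNReal.ofReal α • Measure.dirac (1 : ℝ) +
        ENNReal.ofReal (1 - α) • Measure.dirac (0 : ℝ))
    (hε : Measure.map ε ℙ = Pε)
    (hindep : iIndepFun
      ![G₁, G₂, η, ε] ℙ)
    (Y : Ω → ℝ)
    (hY : ∀ ω, Y ω = q (η ω * G₁ ω + (1 - η ω) * G₂ ω) (ε ω))
    (a b c : ℝ)
    (ha : a = ∫ ω, F (Y ω) * ((G₁ ω) ^ 2 - 1) ∂ℙ)
    (hb : b = ∫ ω, (F (Y ω)) ^ 2 * (G₁ ω) ^ 2 ∂ℙ)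
    (hc : c = ∫ ω, (F (Y ω)) ^ 2 ∂ℙ)
    (ha_pos : 0 < a) (hδa : c / a ^ 2 < δ)
    (χ σV β μ σU : ℕ → ℝ)
    (hμ1 : μ 1 = 1 / Real.sqrt δ) (hσU1 : σU 1 = 0)
    (hχ : ∀ t ≥ 1, χ (t + 1) = δ * a * μ t)
    (hσV : ∀ t ≥ 1, σV (t + 1) = δ * (b * (μ t) ^ 2 + c * σU t))
    (hβ : ∀ t ≥ 1, β (t + 1) = Real.sqrt ((χ (t + 1)) ^ 2 + σV (t + 1)))
    (hμ : ∀ t ≥ 1, μ (t + 1) = χ (t + 1) / (Real.sqrt δ * β (t + 1)))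
    (hσU : ∀ t ≥ 1, σU (t + 1) = σV (t + 1) / (δ * (β (t + 1)) ^ 2)) :
    Tendsto χ atTop (nhds (Real.sqrt
      ((δ * a ^ 2) * (δ * a ^ 2 - c) / (δ * a ^ 2 + b - c)))) ∧
    Tendsto σV atTop (nhds ((δ * a ^ 2) * b / (δ * a ^ 2 + b - c))) ∧
    Tendsto (fun t => (β t) ^ 2) atTop (nhds (δ * a ^ 2)) ∧
    δ * a ^ 2 = (Real.sqrt ((δ * a ^ 2) * (δ * a ^ 2 - c) / (δ * a ^ 2 + b - c))) ^ 2
        + (δ * a ^ 2) * b / (δ * a ^ 2 + b - c) := by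

  -- Nonnegativity of b and c (these are integrals of nonnegative functions)
  have hc0 : 0 ≤ c := by
    rw [hc]; exact integral_nonneg fun ω => sq_nonneg _
  have hb0 : 0 ≤ b := by
    rw [hb]; exact integral_nonneg fun ω => mul_nonneg (sq_nonneg _) (sq_nonneg _)
  have ha2 : (0:ℝ) < a ^ 2 := pow_pos ha_pos 2
  have hK : 0 < δ * a ^ 2 := mul_pos hδ ha2
  have hcK : c < δ * a ^ 2 := by
    have h := (div_lt_iff₀ ha2).mp hδa; linarith
  obtain ⟨D, hD_def⟩ : ∃ D : ℝ, D = δ * a ^ 2 + b - c := ⟨_, rfl⟩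
  have hD : 0 < D := by rw [hD_def]; linarith
  have hKcne : δ * a ^ 2 - c ≠ 0 := by linarith
  obtain ⟨xs, hxs_def⟩ : ∃ xs : ℝ, xs = δ * D / (δ * a ^ 2 - c) := ⟨_, rfl⟩
  have hxs : 0 < xs := by
    rw [hxs_def]; exact div_pos (mul_pos hδ hD) (by linarith)
  obtain ⟨r, hr_def⟩ : ∃ r : ℝ, r = c / (δ * a ^ 2) := ⟨_, rfl⟩
  have hr0 : 0 ≤ r := by rw [hr_def]; exact div_nonneg hc0 hK.le
  have hr1 : r < 1 := by rw [hr_def]; exact (div_lt_one hK).mpr hcK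
  have hfix : xs = r * xs + δ * D / (δ * a ^ 2) := by
    rw [hxs_def, hr_def]
    field_simp
    ring
  obtain ⟨x, hxpos, hx1, hxrec, hxlim⟩ :
      ∃ x : ℕ → ℝ, (∀ t, 0 < x t) ∧ x 1 = δ ∧
        (∀ t, 1 ≤ t → x (t+1) = r * x t + δ * D / (δ * a ^ 2)) ∧
        Tendsto (fun t => x (t+1)) atTop (nhds xs) := by
    refine ⟨fun t => xs + r ^ (t - 1) * (δ - xs), ?_, ?_, ?_, ?_⟩
    · intro t
      have h1 : 0 ≤ r ^ (t-1) := pow_nonneg hr0 _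
      have h2 : r ^ (t-1) ≤ 1 := pow_le_one₀ hr0 hr1.le
      have hm1 : 0 ≤ xs - min xs δ := sub_nonneg.2 (min_le_left _ _)
      have hm2 : 0 ≤ δ - min xs δ := sub_nonneg.2 (min_le_right _ _)
      have hmin : min xs δ ≤ xs + r ^ (t - 1) * (δ - xs) := by
        have e1 : 0 ≤ (1 - r ^ (t-1)) * (xs - min xs δ) :=
          mul_nonneg (by linarith) hm1
        have e2 : 0 ≤ r ^ (t-1) * (δ - min xs δ) := mul_nonneg h1 hm2
        nlinarith
      exact lt_of_lt_of_le (lt_min hxs hδ) hmin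
    · simp
    · intro t ht
      obtain ⟨s, rfl⟩ : ∃ s, t = s + 1 := ⟨t - 1, by omega⟩
      simp only [Nat.add_sub_cancel]
      linear_combination hfix
    · have hrt : Tendsto (fun t : ℕ => r ^ t) atTop (nhds 0) :=
        tendsto_pow_atTop_nhds_zero_of_lt_one hr0 hr1
      have h : Tendsto (fun t : ℕ => xs + r ^ t * (δ - xs)) atTop
          (nhds (xs + 0 * (δ - xs))) := tendsto_const_nhds.add (hrt.mul_const _)
      simp only [zero_mul, add_zero] at h
      refine h.congr fun t => ?_
      simp
  -- the key invariant, by induction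
  have key : ∀ t, 1 ≤ t →
      0 < μ t ∧ (μ t) ^ 2 * x t = 1 ∧ σU t = 1/δ - (μ t) ^ 2 := by
    intro t ht
    induction t with
    | zero => omega
    | succ n ih =>
      rcases Nat.lt_or_ge 1 (n+1) with h1 | h1
      · have hn1 : 1 ≤ n := by omega
        obtain ⟨hμpos, hμx, hσUe⟩ := ih hn1
        have hxt := hxpos n
        have hχ' := hχ n hn1
        have hχpos : 0 < χ (n+1) := by rw [hχ']; positivity
        have hσV' : σV (n+1) = c + δ*(b-c)*(μ n)^2 := by
          rw [hσV n hn1, hσUe]; field_simp [hδ.ne']; ring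
        have hsum : (χ (n+1))^2 + σV (n+1) = c + δ*D*(μ n)^2 := by
          rw [hχ', hσV', hD_def]; ring
        have hsump : 0 < c + δ*D*(μ n)^2 := by
          nlinarith [mul_pos (mul_pos hδ hD) (pow_pos hμpos 2)]
        have hβ' : β (n+1) = Real.sqrt (c + δ*D*(μ n)^2) := by
          rw [hβ n hn1, hsum]
        have hβpos : 0 < β (n+1) := by rw [hβ']; exact Real.sqrt_pos.mpr hsump
        have hβsq : (β (n+1))^2 = c + δ*D*(μ n)^2 := by
          rw [hβ']; exact Real.sq_sqrt hsump.le
        have hsd : 0 < Real.sqrt δ := Real.sqrt_pos.mpr hδ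
        have hμp1 : 0 < μ (n+1) := by
          rw [hμ n hn1]; exact div_pos hχpos (mul_pos hsd hβpos)
        have hμsq1 : (μ (n+1))^2 = δ*a^2*(μ n)^2 / (c + δ*D*(μ n)^2) := by
          rw [hμ n hn1, div_pow, mul_pow, Real.sq_sqrt hδ.le, hβsq, hχ']
          rw [eq_div_iff hsump.ne']
          field_simp
        refine ⟨hμp1, ?_, ?_⟩
        · rw [hμsq1, hxrec n hn1, hr_def]
          field_simp
          linear_combination c * hμx
        · rw [hσU n hn1, hβsq, hσV', hμsq1]
          field_simp [hδ.ne', hsump.ne']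
          linear_combination (-(δ * (μ n)^2)) * hD_def
      · have hn0 : n = 0 := by omega
        subst hn0
        have hsd : 0 < Real.sqrt δ := Real.sqrt_pos.mpr hδ
        refine ⟨by rw [hμ1]; positivity, ?_, ?_⟩
        · rw [hμ1, hx1, div_pow, one_pow, Real.sq_sqrt hδ.le]
          field_simp
        · rw [hσU1, hμ1, div_pow, one_pow, Real.sq_sqrt hδ.le]
          simp
  have hμform : ∀ t, 1 ≤ t → μ t = Real.sqrt (1 / x t) := by
    intro t ht
    obtain ⟨hp, hm, _⟩ := key t ht
    have h2 : (μ t)^2 = 1 / x t := by rw [eq_div_iff (hxpos t).ne']; exact hm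
    rw [← h2, Real.sqrt_sq hp.le]
  have hμsqform : ∀ t, 1 ≤ t → (μ t)^2 = 1 / x t := by
    intro t ht
    obtain ⟨hp, hm, _⟩ := key t ht
    rw [eq_div_iff (hxpos t).ne']; exact hm
  have hσVform : ∀ t : ℕ, σV (t+2) = c + δ*(b-c)*(1 / x (t+1)) := by
    intro t
    obtain ⟨hp, hm, hu⟩ := key (t+1) (by omega)
    rw [hσV (t+1) (by omega), hu, ← hμsqform (t+1) (by omega)]
    field_simp [hδ.ne']
    ring
  have hβform : ∀ t : ℕ, (β (t+2))^2 = c + δ*D*(1 / x (t+1)) := by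
    intro t
    obtain ⟨hp, hm, hu⟩ := key (t+1) (by omega)
    have hσV' : σV (t+2) = c + δ*(b-c)*(μ (t+1))^2 := by
      rw [hσV (t+1) (by omega), hu]; field_simp [hδ.ne']; ring
    have hsum : (χ (t+2))^2 + σV (t+2) = c + δ*D*(μ (t+1))^2 := by
      rw [hχ (t+1) (by omega), hσV', hD_def]; ring
    have hsump : 0 < c + δ*D*(μ (t+1))^2 := by
      nlinarith [mul_pos (mul_pos hδ hD) (pow_pos hp 2)]
    rw [hβ (t+1) (by omega), hsum, Real.sq_sqrt hsump.le, hμsqform (t+1) (by omega)]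
  have hχform : ∀ t : ℕ, χ (t+2) = δ * a * Real.sqrt (1 / x (t+1)) := by
    intro t
    rw [hχ (t+1) (by omega), hμform (t+1) (by omega)]
  -- limits
  have hinv : Tendsto (fun t => 1 / x (t+1)) atTop (nhds (1 / xs)) :=
    tendsto_const_nhds.div hxlim hxs.ne'
  have hDgoal : δ * a ^ 2 + b - c = D := hD_def.symm
  rw [hDgoal]
  have hχlim : Tendsto χ atTop
      (nhds (Real.sqrt (δ * a ^ 2 * (δ * a ^ 2 - c) / D))) := by
    have hLeq : δ * a * Real.sqrt (1 / xs)
        = Real.sqrt (δ * a ^ 2 * (δ * a ^ 2 - c) / D) := by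
      rw [show δ * a ^ 2 * (δ * a ^ 2 - c) / D = (δ * a * Real.sqrt (1 / xs))^2 by
        rw [mul_pow, Real.sq_sqrt (by positivity : (0:ℝ) ≤ 1 / xs), hxs_def]
        field_simp]
      rw [Real.sqrt_sq (by positivity)]
    have h1 : Tendsto (fun t => δ * a * Real.sqrt (1 / x (t+1))) atTop
        (nhds (δ * a * Real.sqrt (1 / xs))) :=
      ((Real.continuous_sqrt.tendsto _).comp hinv).const_mul (δ * a)
    have h2 : Tendsto (fun t => χ (t+2)) atTop
        (nhds (Real.sqrt (δ * a ^ 2 * (δ * a ^ 2 - c) / D))) := by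
      rw [← hLeq]
      exact h1.congr fun t => (hχform t).symm
    exact (tendsto_add_atTop_iff_nat 2).mp h2
  have hσVlim : Tendsto σV atTop (nhds (δ * a ^ 2 * b / D)) := by
    have hLeq : c + δ * (b - c) * (1 / xs) = δ * a ^ 2 * b / D := by
      rw [hxs_def]
      field_simp [hδ.ne', hD.ne', hKcne]
      linear_combination c * hD_def
    have h1 : Tendsto (fun t => c + δ * (b - c) * (1 / x (t+1))) atTop
        (nhds (c + δ * (b - c) * (1 / xs))) :=
      tendsto_const_nhds.add (hinv.const_mul (δ * (b - c)))
    have h2 : Tendsto (fun t => σV (t+2)) atTop (nhds (δ * a ^ 2 * b / D)) := by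
      rw [← hLeq]
      exact h1.congr fun t => (hσVform t).symm
    exact (tendsto_add_atTop_iff_nat 2).mp h2
  have hβlim : Tendsto (fun t => (β t)^2) atTop (nhds (δ * a ^ 2)) := by
    have hLeq : c + δ * D * (1 / xs) = δ * a ^ 2 := by
      rw [hxs_def]
      field_simp [hδ.ne', hD.ne', hKcne]
      ring
    have h1 : Tendsto (fun t => c + δ * D * (1 / x (t+1))) atTop
        (nhds (c + δ * D * (1 / xs))) :=
      tendsto_const_nhds.add (hinv.const_mul (δ * D))
    have h2 : Tendsto (fun t => (β (t+2))^2) atTop (nhds (δ * a ^ 2)) := by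
      rw [← hLeq]
      exact h1.congr fun t => (hβform t).symm
    exact (tendsto_add_atTop_iff_nat 2).mp h2
  refine ⟨hχlim, hσVlim, hβlim, ?_⟩
  have hnn : (0:ℝ) ≤ δ * a ^ 2 * (δ * a ^ 2 - c) / D :=
    div_nonneg (mul_nonneg hK.le (by linarith)) hD.le
  rw [Real.sq_sqrt hnn, hD_def]
  have hDne' : δ * a ^ 2 + b - c ≠ 0 := by linarith
  field_simp [hDne']
  ring
end

section
/- For every y ∈ ℝ: m₀(y) = (2π(1+σ²))^{−1/2}·exp(−y²/(2(1+σ²))), m₁(y) = m₀(y)·y/(1+σ²), and m₂(y) = m₀(y)·(y² + σ² + σ⁴)/(1+σ²)². Consequently, ∫_ℝ m₁(y)²/m₀(y) dy = 1/(1+σ²) and ∫_ℝ (m₂(y) − m₀(y))²/m₀(y) dy = 2/(1+σ²)². -/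
open MeasureTheory Real Set


open MeasureTheory Real Set

lemma integrable_pow_mul_gauss {b : ℝ} (hb : 0 < b) (n : ℕ) :
    Integrable fun x : ℝ => x ^ n * Real.exp (-b * x ^ 2) := by
  have h := integrable_rpow_mul_exp_neg_mul_sq hb (s := (n : ℝ))
    (lt_of_lt_of_le (by norm_num) (Nat.cast_nonneg n))
  simpa [Real.rpow_natCast] using h

lemma gauss_I1 {b : ℝ} (hb : 0 < b) : ∫ x : ℝ, x * Real.exp (-b * x ^ 2) = 0 := by
  have hderiv : ∀ x : ℝ, HasDerivAt (fun x : ℝ => Real.exp (-b * x ^ 2))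
      (-(2 * b) * (x * Real.exp (-b * x ^ 2))) x := by
    intro x
    have h := ((hasDerivAt_pow 2 x).const_mul (-b)).exp
    convert h using 1
    simp
    ring
  have h0 := integral_eq_zero_of_hasDerivAt_of_integrable hderiv
    ((integrable_mul_exp_neg_mul_sq hb).const_mul (-(2 * b)))
    (integrable_exp_neg_mul_sq hb)
  rw [integral_const_mul] at h0
  rcases mul_eq_zero.mp h0 with h | h
  · norm_num at h
    exact absurd h hb.ne'
  · exact h

lemma gauss_step {b : ℝ} (hb : 0 < b) (n : ℕ) :
    ∫ x : ℝ, x ^ (n + 2) * Real.exp (-b * x ^ 2)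
      = ((n + 1 : ℝ) / (2 * b)) * ∫ x : ℝ, x ^ n * Real.exp (-b * x ^ 2) := by
  have hderiv : ∀ x : ℝ, HasDerivAt (fun x : ℝ => x ^ (n + 1) * Real.exp (-b * x ^ 2))
      ((n + 1 : ℝ) * (x ^ n * Real.exp (-b * x ^ 2))
        - 2 * b * (x ^ (n + 2) * Real.exp (-b * x ^ 2))) x := by
    intro x
    have h1 : HasDerivAt (fun x : ℝ => x ^ (n + 1)) ((n + 1 : ℝ) * x ^ n) x := by
      simpa using hasDerivAt_pow (n + 1) x
    have h2 : HasDerivAt (fun x : ℝ => Real.exp (-b * x ^ 2))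
        (Real.exp (-b * x ^ 2) * (-b * (2 * x))) x := by
      simpa using ((hasDerivAt_pow 2 x).const_mul (-b)).exp
    refine (h1.mul h2).congr_deriv ?_
    ring
  have hf' : Integrable (fun x : ℝ => (n + 1 : ℝ) * (x ^ n * Real.exp (-b * x ^ 2))
      - 2 * b * (x ^ (n + 2) * Real.exp (-b * x ^ 2))) :=
    ((integrable_pow_mul_gauss hb n).const_mul _).sub
      ((integrable_pow_mul_gauss hb (n + 2)).const_mul _)
  have h0 := integral_eq_zero_of_hasDerivAt_of_integrable hderiv hf'
    (integrable_pow_mul_gauss hb (n + 1))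
  rw [integral_sub ((integrable_pow_mul_gauss hb n).const_mul _)
    ((integrable_pow_mul_gauss hb (n + 2)).const_mul _), integral_const_mul,
    integral_const_mul] at h0
  rw [eq_comm, div_mul_eq_mul_div, div_eq_iff (by positivity : (2:ℝ)*b ≠ 0)]
  linear_combination h0

lemma gauss_I2 {b : ℝ} (hb : 0 < b) :
    ∫ x : ℝ, x ^ 2 * Real.exp (-b * x ^ 2) = Real.sqrt (π / b) * (1 / (2 * b)) := by
  have h := gauss_step hb 0
  simp only [pow_zero, one_mul, Nat.cast_zero] at h
  rw [h, integral_gaussian]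
  ring

lemma gauss_I4 {b : ℝ} (hb : 0 < b) :
    ∫ x : ℝ, x ^ 4 * Real.exp (-b * x ^ 2) = Real.sqrt (π / b) * (3 / (4 * b ^ 2)) := by
  have h := gauss_step hb 2
  norm_num at h
  have h2 := gauss_I2 hb
  simp only [neg_mul] at h h2 ⊢
  rw [h, h2]
  field_simp
  ring

/-- Explicit Gaussian moments for the Gaussian-noise linear regression kernel, and the
resulting values `∫ m₁²/m₀ = 1/(1+σ²)` and `∫ (m₂−m₀)²/m₀ = 2/(1+σ²)²`. -/
theorem mixed_linear_regression_moments
    (σ : ℝ) (hσ : 0 < σ)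
    (p : ℝ → ℝ → ℝ)
    (hp : ∀ g y, p g y =
      Real.exp (-((y - g) ^ 2) / (2 * σ ^ 2)) / Real.sqrt (2 * Real.pi * σ ^ 2))
    (m₀ m₁ m₂ : ℝ → ℝ)
    (hm₀ : ∀ y, m₀ y = ∫ g, Real.exp (-(g ^ 2) / 2) / Real.sqrt (2 * Real.pi) * p g y)
    (hm₁ : ∀ y, m₁ y =
      ∫ g, g * (Real.exp (-(g ^ 2) / 2) / Real.sqrt (2 * Real.pi)) * p g y)
    (hm₂ : ∀ y, m₂ y =
      ∫ g, g ^ 2 * (Real.exp (-(g ^ 2) / 2) / Real.sqrt (2 * Real.pi)) * p g y) :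
    (∀ y, m₀ y =
      Real.exp (-(y ^ 2) / (2 * (1 + σ ^ 2))) / Real.sqrt (2 * Real.pi * (1 + σ ^ 2))) ∧
    (∀ y, m₁ y = m₀ y * y / (1 + σ ^ 2)) ∧
    (∀ y, m₂ y = m₀ y * (y ^ 2 + σ ^ 2 + σ ^ 4) / (1 + σ ^ 2) ^ 2) ∧
    (∫ y, (m₁ y) ^ 2 / m₀ y) = 1 / (1 + σ ^ 2) ∧
    (∫ y, (m₂ y - m₀ y) ^ 2 / m₀ y) = 2 / (1 + σ ^ 2) ^ 2 := by
  have hσ2 : (0:ℝ) < σ ^ 2 := by positivity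
  set s : ℝ := 1 + σ ^ 2 with hs_def
  have hs : 0 < s := by positivity
  set A : ℝ := s / (2 * σ ^ 2) with hA_def
  have hA : 0 < A := by positivity
  set C : ℝ → ℝ := fun y => Real.exp (-(y ^ 2) / (2 * s)) /
    (Real.sqrt (2 * Real.pi) * Real.sqrt (2 * Real.pi * σ ^ 2)) with hC_def
  -- pointwise Gaussian product identity
  have hpoint : ∀ y g : ℝ, Real.exp (-(g ^ 2) / 2) / Real.sqrt (2 * Real.pi) * p g y
      = C y * Real.exp (-A * (g - y / s) ^ 2) := by
    intro y g
    rw [hp, hC_def, div_mul_div_comm, div_mul_eq_mul_div]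
    congr 1
    rw [← Real.exp_add, ← Real.exp_add]
    congr 1
    rw [hA_def, hs_def]
    field_simp
    ring
  -- the basic Gaussian integral with the shifted center
  have hshift0 : ∀ y : ℝ, (∫ g : ℝ, Real.exp (-A * (g - y / s) ^ 2))
      = Real.sqrt (π / A) := by
    intro y
    rw [show (∫ g : ℝ, Real.exp (-A * (g - y / s) ^ 2))
        = ∫ u : ℝ, Real.exp (-A * u ^ 2) from
      integral_sub_right_eq_self (fun u => Real.exp (-A * u ^ 2)) (y / s)]
    exact integral_gaussian A
  have hm0' : ∀ y, m₀ y = C y * Real.sqrt (π / A) := by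
    intro y
    rw [hm₀ y]
    simp_rw [hpoint y]
    rw [integral_const_mul, hshift0 y]
  -- first moment
  have hm1' : ∀ y, m₁ y = (y / s) * (C y * Real.sqrt (π / A)) := by
    intro y
    rw [hm₁ y]
    have hint : (fun g : ℝ => g * (Real.exp (-(g ^ 2) / 2) / Real.sqrt (2 * Real.pi)) * p g y)
        = fun g => C y * (g * Real.exp (-A * (g - y / s) ^ 2)) := by
      funext g
      rw [mul_assoc, hpoint y g]
      ring
    rw [hint, integral_const_mul]
    have hsh : (∫ g : ℝ, g * Real.exp (-A * (g - y / s) ^ 2))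
        = ∫ u : ℝ, (u + y / s) * Real.exp (-A * u ^ 2) := by
      rw [show (fun g : ℝ => g * Real.exp (-A * (g - y / s) ^ 2))
          = fun g => (fun u : ℝ => (u + y / s) * Real.exp (-A * u ^ 2)) (g - y / s) from
        funext fun g => by simp [sub_add_cancel]]
      exact integral_sub_right_eq_self (fun u => (u + y / s) * Real.exp (-A * u ^ 2)) (y / s)
    rw [hsh]
    have hexp : (fun u : ℝ => (u + y / s) * Real.exp (-A * u ^ 2))
        = fun u => u * Real.exp (-A * u ^ 2) + (y / s) * Real.exp (-A * u ^ 2) := by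
      funext u; ring
    rw [hexp, integral_add (integrable_mul_exp_neg_mul_sq hA)
        ((integrable_exp_neg_mul_sq hA).const_mul _),
      gauss_I1 hA, integral_const_mul, integral_gaussian, zero_add]
    ring
  -- second moment
  have hm2' : ∀ y, m₂ y = (1 / (2 * A) + (y / s) ^ 2) * (C y * Real.sqrt (π / A)) := by
    intro y
    rw [hm₂ y]
    have hint : (fun g : ℝ => g ^ 2 * (Real.exp (-(g ^ 2) / 2) / Real.sqrt (2 * Real.pi)) * p g y)
        = fun g => C y * (g ^ 2 * Real.exp (-A * (g - y / s) ^ 2)) := by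
      funext g
      rw [mul_assoc, hpoint y g]
      ring
    rw [hint, integral_const_mul]
    have hsh : (∫ g : ℝ, g ^ 2 * Real.exp (-A * (g - y / s) ^ 2))
        = ∫ u : ℝ, (u + y / s) ^ 2 * Real.exp (-A * u ^ 2) := by
      rw [show (fun g : ℝ => g ^ 2 * Real.exp (-A * (g - y / s) ^ 2))
          = fun g => (fun u : ℝ => (u + y / s) ^ 2 * Real.exp (-A * u ^ 2)) (g - y / s) from
        funext fun g => by simp [sub_add_cancel]]
      exact integral_sub_right_eq_self (fun u => (u + y / s) ^ 2 * Real.exp (-A * u ^ 2)) (y / s)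
    rw [hsh]
    have hexp : (fun u : ℝ => (u + y / s) ^ 2 * Real.exp (-A * u ^ 2))
        = fun u => u ^ 2 * Real.exp (-A * u ^ 2)
          + ((2 * (y / s)) * (u * Real.exp (-A * u ^ 2))
            + (y / s) ^ 2 * Real.exp (-A * u ^ 2)) := by
      funext u; ring
    have i1 : Integrable (fun u : ℝ => u ^ 2 * Real.exp (-A * u ^ 2)) :=
      integrable_pow_mul_gauss hA 2
    have i2 : Integrable (fun u : ℝ => (2 * (y / s)) * (u * Real.exp (-A * u ^ 2))) :=
      (integrable_mul_exp_neg_mul_sq hA).const_mul _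
    have i3 : Integrable (fun u : ℝ => (y / s) ^ 2 * Real.exp (-A * u ^ 2)) :=
      (integrable_exp_neg_mul_sq hA).const_mul _
    have i23 : Integrable (fun u : ℝ => (2 * (y / s)) * (u * Real.exp (-A * u ^ 2))
        + (y / s) ^ 2 * Real.exp (-A * u ^ 2)) := i2.add i3
    rw [hexp, integral_add i1 i23, integral_add i2 i3,
      gauss_I2 hA, integral_const_mul, integral_const_mul, gauss_I1 hA, integral_gaussian]
    ring
  -- closed form for m₀
  have hsq : Real.sqrt (π / A) * Real.sqrt (2 * π * s)
      = Real.sqrt (2 * π) * Real.sqrt (2 * π * σ ^ 2) := by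
    rw [← Real.sqrt_mul (by positivity), ← Real.sqrt_mul (by positivity)]
    congr 1
    rw [hA_def]
    field_simp
  have H0 : ∀ y, m₀ y = Real.exp (-(y ^ 2) / (2 * s)) / Real.sqrt (2 * π * s) := by
    intro y
    rw [hm0' y, hC_def]
    rw [div_mul_eq_mul_div, div_eq_div_iff (by positivity) (by positivity)]
    rw [mul_assoc, hsq]
  have H1 : ∀ y, m₁ y = m₀ y * y / s := by
    intro y
    rw [hm1' y, hm0' y]
    ring
  have H2 : ∀ y, m₂ y = m₀ y * (y ^ 2 + σ ^ 2 + σ ^ 4) / s ^ 2 := by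
    intro y
    rw [hm2' y, hm0' y]
    rw [show (1 / (2 * A) + (y / s) ^ 2) = (y ^ 2 + σ ^ 2 + σ ^ 4) / s ^ 2 from by
      rw [hA_def, hs_def]; field_simp; ring]
    ring
  refine ⟨H0, H1, H2, ?_, ?_⟩
  -- the two integrals
  all_goals {
    set b : ℝ := 1 / (2 * s) with hb_def
    have hb : 0 < b := by positivity
    have hπb : Real.sqrt (π / b) = Real.sqrt (2 * π * s) := by
      congr 1
      rw [hb_def]
      field_simp
    set c : ℝ := Real.sqrt (2 * π * s) with hc_def
    have hc : 0 < c := by rw [hc_def]; positivity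
    have hE : ∀ y : ℝ, Real.exp (-(y ^ 2) / (2 * s)) = Real.exp (-b * y ^ 2) := by
      intro y; congr 1; rw [hb_def]; ring
    have hm0pos : ∀ y, 0 < m₀ y := by
      intro y; rw [H0 y]; positivity
    first
    | · -- ∫ m₁² / m₀
        have hpt : ∀ y : ℝ, (m₁ y) ^ 2 / m₀ y = y ^ 2 * Real.exp (-b * y ^ 2) / (c * s ^ 2) := by
          intro y
          rw [H1 y, H0 y, hE y]
          have he : Real.exp (-b * y ^ 2) ≠ 0 := Real.exp_ne_zero _
          field_simp
        simp_rw [hpt]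
        rw [integral_div, gauss_I2 hb, hπb]
        rw [show (1 : ℝ) / (2 * b) = s from by rw [hb_def]; field_simp]
        field_simp
    | · -- ∫ (m₂ - m₀)² / m₀
        have hpt : ∀ y : ℝ, (m₂ y - m₀ y) ^ 2 / m₀ y
            = (y ^ 2 - s) ^ 2 * Real.exp (-b * y ^ 2) / (c * s ^ 4) := by
          intro y
          rw [H2 y, H0 y, hE y]
          have he : Real.exp (-b * y ^ 2) ≠ 0 := Real.exp_ne_zero _
          rw [hs_def]
          field_simp
          ring
        simp_rw [hpt]
        rw [integral_div]
        rw [show (fun y : ℝ => (y ^ 2 - s) ^ 2 * Real.exp (-b * y ^ 2))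
            = fun y => y ^ 4 * Real.exp (-b * y ^ 2)
              - (2 * s) * (y ^ 2 * Real.exp (-b * y ^ 2)) + s ^ 2 * Real.exp (-b * y ^ 2) from
          funext fun y => by ring]
        have i4 : Integrable (fun y : ℝ => y ^ 4 * Real.exp (-b * y ^ 2)) :=
          integrable_pow_mul_gauss hb 4
        have i2 : Integrable (fun y : ℝ => (2 * s) * (y ^ 2 * Real.exp (-b * y ^ 2))) :=
          (integrable_pow_mul_gauss hb 2).const_mul _
        have i42 : Integrable (fun y : ℝ => y ^ 4 * Real.exp (-b * y ^ 2)
            - (2 * s) * (y ^ 2 * Real.exp (-b * y ^ 2))) := i4.sub i2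
        have i0 : Integrable (fun y : ℝ => s ^ 2 * Real.exp (-b * y ^ 2)) :=
          (integrable_exp_neg_mul_sq hb).const_mul _
        rw [integral_add i42 i0, integral_sub i4 i2,
          integral_const_mul, integral_const_mul,
          gauss_I4 hb, gauss_I2 hb, integral_gaussian, hπb]
        rw [show (1 : ℝ) / (2 * b) = s from by rw [hb_def]; field_simp,
          show (3 : ℝ) / (4 * b ^ 2) = 3 * s ^ 2 from by rw [hb_def]; field_simp; ring]
        field_simp
        ring
  }
end
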